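/- arXiv:0906.3574 — 3 statements merged into one kernel-verified Lean document; each statement's English description precedes it below -/
import Mathlib

section
/- Let G be a finite group, let n = μ(G), and let φ : G → Sym(n) be an injective group homomorphism. Suppose K is a nontrivial subgroup of Sym(n) such that every element of K commutes with every element of the image φ(G), and K intersects φ(G) trivially. Then μ(G × K) = μ(G), and in particular μ(G × K) < μ(G) + μ(K). -/
/-- The minimal faithful permutation degree of a group `G`: the least `n` such that
`G` embeds into the symmetric group `Sym(n) = Equiv.Perm (Fin n)`. -/
noncomputable def minFaithfulDegree (G : Type*) [Group G] : ℕ :=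
  sInf {n : ℕ | ∃ φ : G →* Equiv.Perm (Fin n), Function.Injective φ}

theorem mu_prod_centralizing_complement (G : Type*) [Group G] [Finite G]
    (n : ℕ) (hn : n = minFaithfulDegree G)
    (φ : G →* Equiv.Perm (Fin n)) (hφ : Function.Injective φ)
    (K : Subgroup (Equiv.Perm (Fin n))) (hK : K ≠ ⊥)
    (hcomm : ∀ k ∈ K, ∀ g : G, Commute k (φ g))
    (hdisj : K ⊓ φ.range = ⊥) :
    minFaithfulDegree (G × K) = minFaithfulDegree G ∧
      minFaithfulDegree (G × K) < minFaithfulDegree G + minFaithfulDegree K := by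
  have hcomm' : ∀ (g : G) (k : K), Commute (φ g) (K.subtype k) :=
    fun g k => (hcomm k k.2 g).symm
  -- the combined homomorphism
  set ψ : G × K →* Equiv.Perm (Fin n) := φ.noncommCoprod K.subtype hcomm' with hψdef
  have hψinj : Function.Injective ψ := by
    rw [← MonoidHom.ker_eq_bot_iff, eq_bot_iff]
    rintro ⟨g, k⟩ h
    have h1 : φ g * (k : Equiv.Perm (Fin n)) = 1 := h
    have hk : (k : Equiv.Perm (Fin n)) = (φ g)⁻¹ := by
      rw [eq_inv_iff_mul_eq_one]; exact (hcomm k k.2 g).eq.trans h1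
    have hmem : (k : Equiv.Perm (Fin n)) ∈ K ⊓ φ.range :=
      ⟨k.2, ⟨g⁻¹, by simp [hk]⟩⟩
    rw [hdisj] at hmem
    have hk1 : (k : Equiv.Perm (Fin n)) = 1 := hmem
    have hg1 : φ g = 1 := by rw [hk1] at h1; simpa using h1
    have : g = 1 := hφ (by simpa using hg1)
    rw [Subgroup.mem_bot]
    exact Prod.ext this (Subtype.ext hk1)
  have hmemGK : n ∈ {m : ℕ | ∃ χ : G × K →* Equiv.Perm (Fin m), Function.Injective χ} :=
    ⟨ψ, hψinj⟩
  have hle : minFaithfulDegree (G × K) ≤ n := Nat.sInf_le hmemGK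
  -- lower bound: G embeds into any faithful rep of G × K
  have hmin := Nat.sInf_mem (Set.nonempty_of_mem hmemGK)
  obtain ⟨χ, hχ⟩ := hmin
  have hge : minFaithfulDegree G ≤ minFaithfulDegree (G × K) :=
    Nat.sInf_le ⟨χ.comp (MonoidHom.inl G K), fun a b hab => by
      have := hχ hab; simpa using congrArg Prod.fst this⟩
  have heq : minFaithfulDegree (G × K) = minFaithfulDegree G :=
    le_antisymm (hn ▸ hle) hge
  refine ⟨heq, ?_⟩
  -- μ(K) > 0
  have hKmem : n ∈ {m : ℕ | ∃ χ : K →* Equiv.Perm (Fin m), Function.Injective χ} :=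
    ⟨K.subtype, Subtype.coe_injective⟩
  have hKmin : minFaithfulDegree K ∈ {m : ℕ | ∃ χ : K →* Equiv.Perm (Fin m), Function.Injective χ} :=
    Nat.sInf_mem (Set.nonempty_of_mem hKmem)
  obtain ⟨χK, hχK⟩ := hKmin
  have hKpos : 0 < minFaithfulDegree K := by
    rcases (Nat.eq_zero_or_pos (minFaithfulDegree K)).symm with h | h
    · exact h
    · exfalso
      apply hK
      rw [eq_bot_iff]
      intro x hx
      haveI : Subsingleton (Equiv.Perm (Fin (minFaithfulDegree K))) := by
        rw [h]; infer_instance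
      have : (⟨x, hx⟩ : K) = 1 := hχK (Subsingleton.elim _ _)
      simpa using congrArg Subtype.val this
  omega
end

section
/- For every natural number m with m ≤ 9, every subgroup G of Sym(m) that is minimally embedded (i.e., G admits no injective group homomorphism into Sym(k) for any k < m), and every element g of the centralizer of G in Sym(m) of order 2, the element g belongs to G. -/
open Equiv Function Pointwise
attribute [local instance] Classical.propDecidable

section Aux
variable {m : ℕ} {G : Subgroup (Equiv.Perm (Fin m))}

/-- transfer a permutation action along an equiv, as a MonoidHom -/
def permCongrHom {α β : Type*} (e : α ≃ β) : Equiv.Perm α →* Equiv.Perm β where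
  toFun p := e.permCongr p
  map_one' := by ext x; simp
  map_mul' p q := by ext x; simp

lemma permCongrHom_injective {α β : Type*} (e : α ≃ β) :
    Function.Injective (_root_.permCongrHom e) := fun p q h => by
  ext x
  have := congrArg (fun (f : Equiv.Perm β) => e.symm (f (e x))) h
  simpa [_root_.permCongrHom] using this

/-- From `hmin`, any action of `G` on a set of size `< m` has a nontrivial kernel element. -/
lemma small_kernel
    (hmin : ∀ k < m, ∀ φ : G →* Equiv.Perm (Fin k), ¬ Function.Injective φ)
    {Y : Type} [Fintype Y] (ρ : G →* Equiv.Perm Y) (hY : Fintype.card Y < m) :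
    ∃ x : G, x ≠ 1 ∧ ρ x = 1 := by
  by_contra h
  push_neg at h
  have hinj : Function.Injective ρ := by
    rw [← MonoidHom.ker_eq_bot_iff]
    ext x
    simp only [MonoidHom.mem_ker, Subgroup.mem_bot]
    constructor
    · intro hx
      by_contra hne
      exact (h x hne) hx
    · rintro rfl; exact map_one ρ
  have := hmin (Fintype.card Y) hY
    ((_root_.permCongrHom (Fintype.equivFin Y)).comp ρ)
  exact this ((permCongrHom_injective _).comp hinj)

/-- extracting a transversal of a fixed-point-free involution-invariant finset -/
lemma exists_transversal (z : Equiv.Perm (Fin m)) (hz : ∀ p, z (z p) = p) :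
    ∀ D : Finset (Fin m), (∀ p ∈ D, z p ∈ D ∧ z p ≠ p) →
    ∃ R : Finset (Fin m), R ⊆ D ∧ (∀ q ∈ R, z q ∉ R) ∧
      (∀ p ∈ D, p ∈ R ∨ z p ∈ R) ∧ D.card = 2 * R.card := by
  intro D
  induction D using Finset.strongInduction with
  | _ D ih =>
    intro hD
    rcases D.eq_empty_or_nonempty with rfl | ⟨p, hp⟩
    · exact ⟨∅, by simp⟩
    · have hzp : z p ∈ D := (hD p hp).1
      have hzpne : z p ≠ p := (hD p hp).2
      set D' := D \ {p, z p} with hD'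
      have hsub : D' ⊂ D := by
        apply Finset.ssubset_iff_of_subset (Finset.sdiff_subset) |>.mpr
        exact ⟨p, hp, by simp [hD']⟩
      have hD'prop : ∀ q ∈ D', z q ∈ D' ∧ z q ≠ q := by
        intro q hq
        have hqD : q ∈ D := (Finset.sdiff_subset) hq
        have hq2 : q ≠ p ∧ q ≠ z p := by
          constructor <;> (intro hc; subst hc; simp [hD'] at hq)
        refine ⟨?_, (hD q hqD).2⟩
        simp only [hD', Finset.mem_sdiff, Finset.mem_insert, Finset.mem_singleton]
        refine ⟨(hD q hqD).1, ?_⟩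
        push_neg
        constructor
        · intro hc; apply hq2.2; rw [← hc, hz]
        · intro hc; apply hq2.1; have := congrArg z hc; rwa [hz, hz] at this
      obtain ⟨R, hR1, hR2, hR3, hR4⟩ := ih D' hsub hD'prop
      refine ⟨insert p R, ?_, ?_, ?_, ?_⟩
      · intro q hq
        rcases Finset.mem_insert.mp hq with rfl | hq
        · exact hp
        · exact (Finset.sdiff_subset) (hR1 hq)
      · intro q hq
        rcases Finset.mem_insert.mp hq with rfl | hq
        · intro hc
          rcases Finset.mem_insert.mp hc with hc | hc
          · exact hzpne hc
          · have := hR1 hc; simp [hD'] at this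
        · intro hc
          rcases Finset.mem_insert.mp hc with hc | hc
          · have := hR1 hq
            simp only [hD', Finset.mem_sdiff, Finset.mem_insert, Finset.mem_singleton] at this
            apply this.2; right; rw [← hc, hz]
          · exact hR2 q hq hc
      · intro q hq
        by_cases hq1 : q = p
        · left; simp [hq1]
        · by_cases hq2 : q = z p
          · right; subst hq2; rw [hz]; simp
          · have hqD' : q ∈ D' := by simp [hD', hq, hq1, hq2]
            rcases hR3 q hqD' with h | h
            · left; exact Finset.mem_insert_of_mem h
            · right; exact Finset.mem_insert_of_mem h
      · have hcard : D.card = D'.card + 2 := by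
          have h2 : ({p, z p} : Finset (Fin m)).card = 2 := by
            rw [Finset.card_insert_of_notMem (by simp [Ne.symm hzpne]), Finset.card_singleton]
          have hsub2 : ({p, z p} : Finset (Fin m)) ⊆ D := by
            intro q hq; rcases Finset.mem_insert.mp hq with rfl | hq
            · exact hp
            · simp only [Finset.mem_singleton] at hq; subst hq; exact hzp
          have hle : 2 ≤ D.card := by
            calc 2 = ({p, z p} : Finset (Fin m)).card := h2.symm
            _ ≤ D.card := Finset.card_le_card hsub2
          rw [hD', Finset.card_sdiff_of_subset hsub2, h2]
          omega
        have hpR : p ∉ R := by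
          intro hc; have := hR1 hc; simp [hD'] at this
        rw [hcard, hR4, Finset.card_insert_of_notMem hpR]
        ring
end Aux

section Aux2
variable {m : ℕ} {G : Subgroup (Equiv.Perm (Fin m))}

lemma smul_pt (τ : G) (p : Fin m) : τ • p = (τ : Equiv.Perm (Fin m)) p := rfl

noncomputable def zresFun (z : Equiv.Perm (Fin m)) (Δ : Set (Fin m)) : Fin m → Fin m :=
  fun p => if p ∈ Δ then z p else p

lemma zresFun_involutive (z : Equiv.Perm (Fin m)) (Δ : Set (Fin m))
    (h2 : ∀ p, z (z p) = p) (hzinv : ∀ p ∈ Δ, z p ∈ Δ) :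
    Function.Involutive (zresFun z Δ) := by
  intro p
  unfold zresFun
  by_cases hp : p ∈ Δ
  · rw [if_pos hp, if_pos (hzinv p hp), h2]
  · rw [if_neg hp, if_neg hp]

noncomputable def zres (z : Equiv.Perm (Fin m)) (Δ : Set (Fin m))
    (h2 : ∀ p, z (z p) = p) (hzinv : ∀ p ∈ Δ, z p ∈ Δ) : Equiv.Perm (Fin m) :=
  Function.Involutive.toPerm _ (zresFun_involutive z Δ h2 hzinv)

lemma zres_apply (z : Equiv.Perm (Fin m)) (Δ : Set (Fin m)) (h2) (hzinv) (p : Fin m) :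
    zres z Δ h2 hzinv p = if p ∈ Δ then z p else p := rfl

lemma mem_of_apply_mem {Δ : Set (Fin m)} (hGinv : ∀ (τ : G) p, p ∈ Δ → (τ : Equiv.Perm (Fin m)) p ∈ Δ)
    (τ : G) (p : Fin m) (h : (τ : Equiv.Perm (Fin m)) p ∈ Δ) : p ∈ Δ := by
  have := hGinv τ⁻¹ _ h
  simpa using this

/-- The collapse construction: any `G`-, `z`- invariant set of moved points
gives a nontrivial kernel element supported on it, preserving each pair. -/
lemma collapse_kernel
    (hmin : ∀ k < m, ∀ φ : G →* Equiv.Perm (Fin k), ¬ Function.Injective φ)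
    (z : Equiv.Perm (Fin m)) (h2 : ∀ p, z (z p) = p)
    (Δ : Set (Fin m)) (hGinv : ∀ (τ : G) p, p ∈ Δ → (τ : Equiv.Perm (Fin m)) p ∈ Δ)
    (hcomm : ∀ (τ : G) (p : Fin m), (τ : Equiv.Perm (Fin m)) (z p) = z ((τ : Equiv.Perm (Fin m)) p))
    (hzinv : ∀ p ∈ Δ, z p ∈ Δ) (hmov : ∀ p ∈ Δ, z p ≠ p) (p0 : Fin m) (hp0 : p0 ∈ Δ) :
    ∃ x : Equiv.Perm (Fin m), x ∈ G ∧ x ≠ 1 ∧ (∀ p, p ∉ Δ → x p = p) ∧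
      (∀ p, p ∈ Δ → x p = p ∨ x p = z p) := by
  classical
  set f : Fin m → Finset (Fin m) := fun p => if p ∈ Δ then {p, z p} else {p} with hf
  have hequiv : ∀ (τ : G) (p : Fin m), τ • f p = f ((τ : Equiv.Perm (Fin m)) p) := by
    intro τ p
    by_cases hp : p ∈ Δ
    · have hp' : (τ : Equiv.Perm (Fin m)) p ∈ Δ := hGinv τ p hp
      simp only [hf, if_pos hp, if_pos hp']
      rw [Finset.smul_finset_insert, Finset.smul_finset_singleton, smul_pt, smul_pt, hcomm]
    · have hp' : (τ : Equiv.Perm (Fin m)) p ∉ Δ := fun hc => hp (mem_of_apply_mem hGinv τ p hc)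
      simp only [hf, if_neg hp, if_neg hp']
      rw [Finset.smul_finset_singleton, smul_pt]
  set X : SubMulAction G (Finset (Fin m)) :=
    { carrier := Set.range f
      smul_mem' := by rintro τ A ⟨p, rfl⟩; exact ⟨(τ : Equiv.Perm (Fin m)) p, (hequiv τ p).symm⟩ } with hX
  haveI : Fintype X := Fintype.ofFinite _
  have hcard : Fintype.card X < m := by
    have hsurj : Function.Surjective (fun p : Fin m => (⟨f p, ⟨p, rfl⟩⟩ : X)) := by
      rintro ⟨A, ⟨p, rfl⟩⟩; exact ⟨p, rfl⟩
    have hninj : ¬ Function.Injective (fun p : Fin m => (⟨f p, ⟨p, rfl⟩⟩ : X)) := by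
      intro hc
      have heq : f p0 = f (z p0) := by
        simp only [hf, if_pos hp0, if_pos (hzinv p0 hp0), h2]
        rw [Finset.pair_comm]
      have := hc (Subtype.ext heq)
      exact hmov p0 hp0 this.symm
    have := Fintype.card_lt_of_surjective_not_injective _ hsurj hninj
    simpa using this
  obtain ⟨x, hx1, hxk⟩ := small_kernel hmin (MulAction.toPermHom G X) hcard
  have hfix : ∀ p : Fin m, x • f p = f p := by
    intro p
    have : (MulAction.toPermHom G X) x ⟨f p, ⟨p, rfl⟩⟩ = ⟨f p, ⟨p, rfl⟩⟩ := by rw [hxk]; rfl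
    have h2' := congrArg Subtype.val this
    simpa [MulAction.toPermHom_apply, SubMulAction.val_smul] using h2'
  refine ⟨(x : Equiv.Perm (Fin m)), x.2, ?_, ?_, ?_⟩
  · intro hc; exact hx1 (Subtype.ext hc)
  · intro p hp
    have := hfix p
    simp only [hf, if_neg hp, Finset.smul_finset_singleton, smul_pt] at this
    exact Finset.singleton_injective this
  · intro p hp
    have := hfix p
    simp only [hf, if_pos hp] at this
    have hmem : (x : Equiv.Perm (Fin m)) p ∈ ({p, z p} : Finset (Fin m)) := by
      rw [← this, Finset.smul_finset_insert, Finset.smul_finset_singleton, smul_pt, smul_pt]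
      exact Finset.mem_insert_self _ _
    simpa using hmem
end Aux2

section Aux3
variable {m : ℕ} {G : Subgroup (Equiv.Perm (Fin m))}

lemma bridge (z : Equiv.Perm (Fin m)) (h2 : ∀ p, z (z p) = p)
    (Δ : Set (Fin m))
    (hGinv : ∀ (τ : G) p, p ∈ Δ → (τ : Equiv.Perm (Fin m)) p ∈ Δ)
    (hcomm : ∀ (τ : G) (p : Fin m), (τ : Equiv.Perm (Fin m)) (z p) = z ((τ : Equiv.Perm (Fin m)) p))
    (hzinv : ∀ p ∈ Δ, z p ∈ Δ) (hmov : ∀ p ∈ Δ, z p ≠ p)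
    {n : ℕ} (r : Fin n → Fin m)
    (hrΔ : ∀ i, r i ∈ Δ)
    (hdist : ∀ i j, i ≠ j → r j ≠ r i ∧ r j ≠ z (r i))
    (hcover : ∀ p ∈ Δ, ∃ i, p = r i ∨ p = z (r i))
    (htrans : ∀ p q, p ∈ Δ → q ∈ Δ →
      ∃ τ : G, (τ : Equiv.Perm (Fin m)) p = q ∨ (τ : Equiv.Perm (Fin m)) p = z q)
    (x0 : Equiv.Perm (Fin m)) (hx0G : x0 ∈ G) (hx0ne : x0 ≠ 1)
    (hx0out : ∀ p, p ∉ Δ → x0 p = p) (hx0in : ∀ p, p ∈ Δ → x0 p = p ∨ x0 p = z p)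
    (hcode : ∀ S : Set (Finset (Fin n)),
      (∀ A ∈ S, ∀ B ∈ S, symmDiff A B ∈ S) →
      (∃ A ∈ S, A ≠ ∅) →
      (∀ A ∈ S, A ≠ ∅ → ∀ i : Fin n, ∃ B ∈ S, B.card = A.card ∧ i ∈ B) →
      Finset.univ ∈ S) :
    zres z Δ h2 hzinv ∈ G := by
  classical
  set Kp : Equiv.Perm (Fin m) → Prop := fun x =>
    x ∈ G ∧ (∀ p, p ∉ Δ → x p = p) ∧ (∀ p, p ∈ Δ → x p = p ∨ x p = z p) with hKp
  -- uniqueness of the pair index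
  have hUniq : ∀ p ∈ Δ, ∀ i j : Fin n, (p = r i ∨ p = z (r i)) → (p = r j ∨ p = z (r j)) → i = j := by
    intro p _ i j hi hj
    by_contra hne
    rcases hi with hi | hi <;> rcases hj with hj | hj
    · exact (hdist i j hne).1 (hj.symm.trans hi)
    · exact (hdist j i (Ne.symm hne)).2 (hi.symm.trans hj)
    · exact (hdist i j hne).2 (hj.symm.trans hi)
    · exact (hdist i j hne).1 (z.injective (hj.symm.trans hi) ▸ rfl)
  -- consistency of movement on a pair
  have hKmove : ∀ x, Kp x → ∀ p ∈ Δ, (x p = p ↔ x (z p) = z p) := by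
    intro x hx p hp
    constructor
    · intro hfix
      rcases hx.2.2 (z p) (hzinv p hp) with h | h
      · exact h
      · rw [h2] at h
        exact absurd (x.injective (h.trans hfix.symm)) (hmov p hp)
    · intro hfix
      rcases hx.2.2 p hp with h | h
      · exact h
      · rw [← hfix] at h
        exact absurd (x.injective h) (fun hc => hmov p hp hc.symm)
  have hK1 : ∀ x, Kp x → ∀ p ∈ Δ, x p = z p → x (z p) = p := by
    intro x hx p hp hxp
    rcases hx.2.2 (z p) (hzinv p hp) with h | h
    · exfalso
      have := (hKmove x hx p hp).mpr h
      rw [this] at hxp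
      exact hmov p hp hxp.symm
    · rw [h2] at h; exact h
  have hKmul : ∀ x y, Kp x → Kp y → Kp (x * y) := by
    intro x y hx hy
    refine ⟨mul_mem hx.1 hy.1, ?_, ?_⟩
    · intro p hp
      simp only [Equiv.Perm.mul_apply]
      rw [hy.2.1 p hp, hx.2.1 p hp]
    · intro p hp
      simp only [Equiv.Perm.mul_apply]
      rcases hy.2.2 p hp with h | h
      · rw [h]; exact hx.2.2 p hp
      · rw [h]
        rcases hx.2.2 (z p) (hzinv p hp) with h' | h'
        · right; exact h'
        · left; rw [h', h2]
  have hKconj : ∀ x (τ : G), Kp x →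
      Kp ((τ : Equiv.Perm (Fin m)) * x * (τ : Equiv.Perm (Fin m))⁻¹) := by
    intro x τ hx
    have hinvmem : ∀ p, p ∈ Δ → ((τ : Equiv.Perm (Fin m)))⁻¹ p ∈ Δ := by
      intro p hp
      have := hGinv τ⁻¹ p hp
      simpa using this
    refine ⟨mul_mem (mul_mem τ.2 hx.1) (inv_mem τ.2), ?_, ?_⟩
    · intro p hp
      have hnot : (τ : Equiv.Perm (Fin m))⁻¹ p ∉ Δ := by
        intro hc
        exact hp (by simpa using hGinv τ _ hc)
      simp only [Equiv.Perm.mul_apply]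
      rw [hx.2.1 _ hnot]
      simp
    · intro p hp
      have hmem : (τ : Equiv.Perm (Fin m))⁻¹ p ∈ Δ := hinvmem p hp
      simp only [Equiv.Perm.mul_apply]
      rcases hx.2.2 _ hmem with h | h
      · left; rw [h]; simp
      · right; rw [h, hcomm]
        simp
  -- the code of bit-vectors
  set bits : Equiv.Perm (Fin m) → Finset (Fin n) :=
    fun x => Finset.univ.filter (fun i => x (r i) ≠ r i) with hbits
  set S : Set (Finset (Fin n)) := {A | ∃ x, Kp x ∧ bits x = A} with hS
  have hSsymm : ∀ A ∈ S, ∀ B ∈ S, symmDiff A B ∈ S := by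
    rintro A ⟨x, hx, rfl⟩ B ⟨y, hy, rfl⟩
    refine ⟨x * y, hKmul x y hx hy, ?_⟩
    ext i
    simp only [hbits, Finset.mem_filter, Finset.mem_univ, true_and, Finset.mem_symmDiff]
    have hri := hrΔ i
    by_cases hyi : y (r i) = r i
    · simp only [Equiv.Perm.mul_apply, hyi]
      tauto
    · have hyz : y (r i) = z (r i) := (hy.2.2 _ hri).resolve_left hyi
      by_cases hxi : x (r i) = r i
      · have : x (z (r i)) = z (r i) := (hKmove x hx _ hri).mp hxi
        simp only [Equiv.Perm.mul_apply, hyz, this]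
        have := hmov _ hri
        tauto
      · have hxz : x (r i) = z (r i) := (hx.2.2 _ hri).resolve_left hxi
        have : x (z (r i)) = r i := hK1 x hx _ hri hxz
        simp only [Equiv.Perm.mul_apply, hyz, this]
        tauto
  have hSne : ∃ A ∈ S, A ≠ ∅ := by
    refine ⟨bits x0, ⟨x0, ⟨hx0G, hx0out, hx0in⟩, rfl⟩, ?_⟩
    have : ∃ p, x0 p ≠ p := by
      by_contra hc
      push_neg at hc
      exact hx0ne (Equiv.ext hc)
    obtain ⟨p, hp⟩ := this
    have hpΔ : p ∈ Δ := by
      by_contra hc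
      exact hp (hx0out p hc)
    obtain ⟨i, hi⟩ := hcover p hpΔ
    have hbit : x0 (r i) ≠ r i := by
      rcases hi with rfl | rfl
      · exact hp
      · intro hc
        exact hp ((hKmove x0 ⟨hx0G, hx0out, hx0in⟩ _ (hrΔ i)).mp hc)
    intro hc
    have : i ∈ bits x0 := by
      simp only [hbits, Finset.mem_filter, Finset.mem_univ, true_and]
      exact hbit
    rw [hc] at this
    simp at this
  have hStrans : ∀ A ∈ S, A ≠ ∅ → ∀ i : Fin n, ∃ B ∈ S, B.card = A.card ∧ i ∈ B := by
    rintro A ⟨x, hx, rfl⟩ hne i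
    have : ∃ j, j ∈ bits x := by
      rcases Finset.nonempty_iff_ne_empty.mpr hne with ⟨j, hj⟩
      exact ⟨j, hj⟩
    obtain ⟨j, hj⟩ := this
    obtain ⟨τ, hτ⟩ := htrans (r j) (r i) (hrΔ j) (hrΔ i)
    set x' := (τ : Equiv.Perm (Fin m)) * x * (τ : Equiv.Perm (Fin m))⁻¹ with hx'
    have hKx' : Kp x' := hKconj x τ hx
    -- the induced index map
    have hιex : ∀ l : Fin n, ∃ k, (τ : Equiv.Perm (Fin m)) (r l) = r k ∨
        (τ : Equiv.Perm (Fin m)) (r l) = z (r k) := by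
      intro l
      obtain ⟨k, hk⟩ := hcover _ (hGinv τ _ (hrΔ l))
      exact ⟨k, by tauto⟩
    choose ι hι using hιex
    have hτmemΔ : ∀ l, (τ : Equiv.Perm (Fin m)) (r l) ∈ Δ := fun l => hGinv τ _ (hrΔ l)
    have hι_inj : Function.Injective ι := by
      intro l1 l2 heq
      by_contra hne'
      have h1 := hι l1
      have h2' := hι l2
      rw [heq] at h1
      have : (τ : Equiv.Perm (Fin m)) (r l1) = (τ : Equiv.Perm (Fin m)) (r l2) ∨
          (τ : Equiv.Perm (Fin m)) (r l1) = z ((τ : Equiv.Perm (Fin m)) (r l2)) ∨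
          z ((τ : Equiv.Perm (Fin m)) (r l1)) = (τ : Equiv.Perm (Fin m)) (r l2) := by
        rcases h1 with h1 | h1 <;> rcases h2' with h2'' | h2''
        · left; rw [h1, h2'']
        · right; left; rw [h1, h2'', h2]
        · right; left; rw [h1, h2'']
        · left; rw [h1, h2'']
      rcases this with h | h | h
      · have := (τ : Equiv.Perm (Fin m)).injective h
        exact (hdist l2 l1 (Ne.symm hne')).1 (by rw [this])
      · rw [← hcomm] at h
        have := (τ : Equiv.Perm (Fin m)).injective h
        exact (hdist l2 l1 (Ne.symm hne')).2 (by rw [this])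
      · rw [← hcomm] at h
        have := (τ : Equiv.Perm (Fin m)).injective h
        exact (hdist l1 l2 hne').2 (by rw [← this])
    have hx'τ : ∀ p, x' ((τ : Equiv.Perm (Fin m)) p) = (τ : Equiv.Perm (Fin m)) (x p) := by
      intro p
      simp [hx']
    have hbitiff : ∀ l, (x' (r (ι l)) ≠ r (ι l)) ↔ (x (r l) ≠ r l) := by
      intro l
      rcases hι l with h | h
      · have key2 : (x' (r (ι l)) = r (ι l)) ↔ (x (r l) = r l) := by
          rw [← h, hx'τ]
          exact ⟨fun h' => (τ : Equiv.Perm (Fin m)).injective h', fun h' => by rw [h']⟩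
        exact not_congr key2
      · have key : (x' (z (r (ι l))) = z (r (ι l))) ↔ (x (r l) = r l) := by
          rw [← h, hx'τ]
          exact ⟨fun h' => (τ : Equiv.Perm (Fin m)).injective h', fun h' => by rw [h']⟩
        have key2 := (hKmove x' hKx' _ (hrΔ (ι l))).trans key
        exact not_congr key2
    have hbsurj : Function.Surjective ι := Finite.surjective_of_injective hι_inj
    have hbitsx' : bits x' = (bits x).image ι := by
      ext k
      simp only [hbits, Finset.mem_filter, Finset.mem_univ, true_and, Finset.mem_image]
      constructor
      · intro hk
        obtain ⟨l, rfl⟩ := hbsurj k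
        exact ⟨l, (hbitiff l).mp hk, rfl⟩
      · rintro ⟨l, hl, rfl⟩
        exact (hbitiff l).mpr hl
    refine ⟨bits x', ⟨x', hKx', rfl⟩, ?_, ?_⟩
    · rw [hbitsx', Finset.card_image_of_injective _ hι_inj]
    · have hιj : ι j = i := by
        apply hUniq ((τ : Equiv.Perm (Fin m)) (r j)) (hτmemΔ j) _ _ (hι j)
        tauto
      rw [hbitsx']
      exact Finset.mem_image.mpr ⟨j, hj, hιj⟩
  have huniv : Finset.univ ∈ S := hcode S hSsymm hSne hStrans
  obtain ⟨x, hKx, hbx⟩ := huniv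
  have hx_eq : x = zres z Δ h2 hzinv := by
    apply Equiv.ext
    intro p
    rw [zres_apply]
    by_cases hp : p ∈ Δ
    · rw [if_pos hp]
      obtain ⟨i, hi⟩ := hcover p hp
      have hbit : x (r i) ≠ r i := by
        have : i ∈ bits x := by rw [hbx]; exact Finset.mem_univ i
        simpa [hbits] using this
      have hxz : x (r i) = z (r i) := (hKx.2.2 _ (hrΔ i)).resolve_left hbit
      rcases hi with rfl | rfl
      · exact hxz
      · rw [hK1 x hKx _ (hrΔ i) hxz, h2]
    · rw [if_neg hp]
      exact hKx.2.1 p hp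
  rw [← hx_eq]
  exact hKx.1
end Aux3

section Codes

lemma code_edge (S : Set (Finset (Fin 4)))
    (hb : ∀ A ∈ S, ∀ B ∈ S, symmDiff A B ∈ S)
    (hc : ∀ A ∈ S, A ≠ ∅ → ∀ i : Fin 4, ∃ B ∈ S, B.card = A.card ∧ i ∈ B)
    (e : Finset (Fin 4)) (he : e ∈ S) (hecard : e.card = 2) :
    Finset.univ ∈ S := by
  by_cases hdisj : ∃ f ∈ S, ∃ g ∈ S, f.card = 2 ∧ g.card = 2 ∧ Disjoint f g
  · obtain ⟨f, hf, g, hg, hf2, hg2, hfg⟩ := hdisj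
    have hu : symmDiff f g = f ∪ g := by
      rw [symmDiff_eq_sup_sdiff_inf, Finset.sup_eq_union, Finset.inf_eq_inter,
        Finset.disjoint_iff_inter_eq_empty.mp hfg]
      simp
    have hcard : (symmDiff f g).card = 4 := by
      rw [hu, Finset.card_union_of_disjoint hfg, hf2, hg2]
    have hmem := hb f hf g hg
    have heq := Finset.eq_univ_of_card (symmDiff f g) (by rw [hcard]; simp)
    rwa [heq] at hmem
  · push_neg at hdisj
    obtain ⟨a, b, hab, hab2⟩ := Finset.card_eq_two.mp hecard
    have hene : e ≠ ∅ := by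
      intro hcl; rw [hcl] at hecard; simp at hecard
    -- pick c outside e
    have hc_ex : ∃ c : Fin 4, c ∉ e := by
      by_contra hcl
      push_neg at hcl
      have : e = Finset.univ := Finset.eq_univ_iff_forall.mpr hcl
      rw [this] at hecard; simp at hecard
    obtain ⟨c, hce⟩ := hc_ex
    obtain ⟨f, hfS, hfcard, hcf⟩ := hc e he hene c
    rw [hecard] at hfcard
    have hef : ¬ Disjoint e f := hdisj e he f hfS hecard hfcard
    obtain ⟨u, hue, huf⟩ := Finset.not_disjoint_iff.mp hef
    have hcu : c ≠ u := fun hcl => hce (hcl ▸ hue)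
    have hfeq : f = {c, u} := by
      symm
      apply Finset.eq_of_subset_of_card_le
      · intro t ht
        rcases Finset.mem_insert.mp ht with rfl | ht
        · exact hcf
        · simp only [Finset.mem_singleton] at ht; subst ht; exact huf
      · rw [hfcard, Finset.card_insert_of_notMem (by simpa using hcu), Finset.card_singleton]
    -- pick d outside e ∪ f
    have hd_ex : ∃ d : Fin 4, d ∉ e ∪ f := by
      by_contra hcl
      push_neg at hcl
      have huniv : e ∪ f = Finset.univ := Finset.eq_univ_iff_forall.mpr hcl
      have : (e ∪ f).card ≤ 3 := by
        calc (e ∪ f).card ≤ e.card + f.card - (e ∩ f).card := by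
              have := Finset.card_union_add_card_inter e f
              omega
        _ ≤ 3 := by
              have h1 : 1 ≤ (e ∩ f).card := Finset.card_pos.mpr ⟨u, Finset.mem_inter.mpr ⟨hue, huf⟩⟩
              omega
      rw [huniv] at this; simp at this
    obtain ⟨d, hd⟩ := hd_ex
    have hde : d ∉ e := fun hcl => hd (Finset.mem_union_left _ hcl)
    have hdf : d ∉ f := fun hcl => hd (Finset.mem_union_right _ hcl)
    obtain ⟨g, hgS, hgcard, hdg⟩ := hc e he hene d
    rw [hecard] at hgcard
    have heg : ¬ Disjoint e g := hdisj e he g hgS hecard hgcard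
    have hfg : ¬ Disjoint f g := hdisj f hfS g hgS hfcard hgcard
    obtain ⟨w, hwe, hwg⟩ := Finset.not_disjoint_iff.mp heg
    obtain ⟨w', hwf', hwg'⟩ := Finset.not_disjoint_iff.mp hfg
    have hdw : d ≠ w := fun hcl => hde (hcl ▸ hwe)
    have hgeq : g = {d, w} := by
      symm
      apply Finset.eq_of_subset_of_card_le
      · intro t ht
        rcases Finset.mem_insert.mp ht with rfl | ht
        · exact hdg
        · simp only [Finset.mem_singleton] at ht; subst ht; exact hwg
      · rw [hgcard, Finset.card_insert_of_notMem (by simpa using hdw), Finset.card_singleton]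
    have hwu : w = u := by
      -- w' ∈ g = {d,w}, w' ≠ d since w' ∈ f; so w' = w; w' ∈ f = {c,u}, w ∈ e so w ≠ c; so w = u
      have hw'd : w' ≠ d := fun hcl => hdf (hcl ▸ hwf')
      have hw'w : w' = w := by
        rw [hgeq] at hwg'
        rcases Finset.mem_insert.mp hwg' with h | h
        · exact absurd h hw'd
        · simpa using h
      have hwc : w ≠ c := fun hcl => hce (hcl ▸ hwe)
      rw [hfeq] at hwf'
      rw [hw'w] at hwf'
      rcases Finset.mem_insert.mp hwf' with h | h
      · exact absurd h hwc
      · simpa using h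
    subst hwu
    -- now f ∆ g = {c, d}, disjoint edge from e: contradiction
    have hfg_mem : symmDiff f g ∈ S := hb f hfS g hgS
    have hcd : c ≠ d := fun hcl => hd (Finset.mem_union_right _ (hcl ▸ hcf))
    have hfgeq : symmDiff f g = {c, d} := by
      rw [hfeq, hgeq]
      ext t
      simp only [Finset.mem_symmDiff, Finset.mem_insert, Finset.mem_singleton]
      constructor
      · rintro (⟨h1, h2⟩ | ⟨h1, h2⟩)
        · rcases h1 with rfl | rfl
          · exact Or.inl rfl
          · exact absurd (Or.inr rfl) h2
        · rcases h1 with rfl | rfl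
          · exact Or.inr rfl
          · exact absurd (Or.inr rfl) h2
      · rintro (rfl | rfl)
        · exact Or.inl ⟨Or.inl rfl, by push_neg; exact ⟨hcd, hcu⟩⟩
        · refine Or.inr ⟨Or.inl rfl, ?_⟩
          push_neg
          exact ⟨fun hcl => hcd hcl.symm, hdw⟩
    have hdisj2 : Disjoint e (symmDiff f g) := by
      rw [hfgeq]
      rw [Finset.disjoint_left]
      intro t hte htc
      rcases Finset.mem_insert.mp htc with rfl | htc
      · exact hce hte
      · simp only [Finset.mem_singleton] at htc; subst htc; exact hde hte
    have hfgcard : (symmDiff f g).card = 2 := by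
      rw [hfgeq, Finset.card_insert_of_notMem (by simpa using hcd), Finset.card_singleton]
    exact absurd hdisj2 (hdisj e he _ hfg_mem hecard hfgcard)

lemma code4 (S : Set (Finset (Fin 4)))
    (hb : ∀ A ∈ S, ∀ B ∈ S, symmDiff A B ∈ S)
    (ha : ∃ A ∈ S, A ≠ ∅)
    (hc : ∀ A ∈ S, A ≠ ∅ → ∀ i : Fin 4, ∃ B ∈ S, B.card = A.card ∧ i ∈ B) :
    Finset.univ ∈ S := by
  obtain ⟨A0, hA0, hA0ne⟩ := ha
  have hcard_pos : 1 ≤ A0.card := Finset.card_pos.mpr (Finset.nonempty_iff_ne_empty.mpr hA0ne)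
  have hcard_le : A0.card ≤ 4 := by
    have := Finset.card_le_univ A0
    simpa using this
  interval_cases h : A0.card
  · -- card 1: all singletons present
    have hsing : ∀ i : Fin 4, ({i} : Finset (Fin 4)) ∈ S := by
      intro i
      obtain ⟨B, hBS, hBcard, hiB⟩ := hc A0 hA0 hA0ne i
      rw [h] at hBcard
      obtain ⟨b, rfl⟩ := Finset.card_eq_one.mp hBcard
      simp only [Finset.mem_singleton] at hiB
      subst hiB
      exact hBS
    have h01 : symmDiff ({0} : Finset (Fin 4)) {1} ∈ S := hb _ (hsing 0) _ (hsing 1)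
    have h23 : symmDiff ({2} : Finset (Fin 4)) {3} ∈ S := hb _ (hsing 2) _ (hsing 3)
    have := hb _ h01 _ h23
    have heq : symmDiff (symmDiff ({0} : Finset (Fin 4)) {1}) (symmDiff ({2} : Finset (Fin 4)) {3}) = Finset.univ := by decide
    rwa [heq] at this
  · exact code_edge S hb hc A0 hA0 h
  · -- card 3
    have hv_ex : ∃ v : Fin 4, v ∉ A0 := by
      by_contra hcl
      push_neg at hcl
      have : A0 = Finset.univ := Finset.eq_univ_iff_forall.mpr hcl
      rw [this] at h; simp at h
    obtain ⟨v, hv⟩ := hv_ex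
    obtain ⟨B, hBS, hBcard, hvB⟩ := hc A0 hA0 hA0ne v
    rw [h] at hBcard
    have hne : A0 ≠ B := fun hcl => hv (hcl ▸ hvB)
    have hunion : (A0 ∪ B).card = 4 := by
      have hle : (A0 ∪ B).card ≤ 4 := by
        have := Finset.card_le_univ (A0 ∪ B); simpa using this
      have hge : 4 ≤ (A0 ∪ B).card := by
        have hsub : A0 ⊆ A0 ∪ B := Finset.subset_union_left
        have hssub : A0 ⊂ A0 ∪ B := by
          refine ⟨hsub, ?_⟩
          intro hcl
          exact hv (hcl (Finset.mem_union_right _ hvB))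
        have := Finset.card_lt_card hssub
        omega
      omega
    have hinter : (A0 ∩ B).card = 2 := by
      have := Finset.card_union_add_card_inter A0 B
      rw [hunion, h, hBcard] at this
      omega
    have hsd : (symmDiff A0 B).card = 2 := by
      rw [symmDiff_eq_sup_sdiff_inf]
      rw [Finset.card_sdiff_of_subset (by intro t ht; exact Finset.mem_union_left _ (Finset.mem_inter.mp ht).1)]
      have : (A0 ⊔ B) = A0 ∪ B := rfl
      rw [this, hunion]
      have : (A0 ⊓ B) = A0 ∩ B := rfl
      rw [this, hinter]
    exact code_edge S hb hc _ (hb _ hA0 _ hBS) hsd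
  · have heq := Finset.eq_univ_of_card A0 (by rw [h]; simp)
    rwa [heq] at hA0

lemma code2 (S : Set (Finset (Fin 2)))
    (hb : ∀ A ∈ S, ∀ B ∈ S, symmDiff A B ∈ S)
    (ha : ∃ A ∈ S, A ≠ ∅)
    (hc : ∀ A ∈ S, A ≠ ∅ → ∀ i : Fin 2, ∃ B ∈ S, B.card = A.card ∧ i ∈ B) :
    Finset.univ ∈ S := by
  obtain ⟨A0, hA0, hA0ne⟩ := ha
  have hcard_pos : 1 ≤ A0.card := Finset.card_pos.mpr (Finset.nonempty_iff_ne_empty.mpr hA0ne)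
  have hcard_le : A0.card ≤ 2 := by
    have := Finset.card_le_univ A0; simpa using this
  interval_cases h : A0.card
  · have hsing : ∀ i : Fin 2, ({i} : Finset (Fin 2)) ∈ S := by
      intro i
      obtain ⟨B, hBS, hBcard, hiB⟩ := hc A0 hA0 hA0ne i
      rw [h] at hBcard
      obtain ⟨b, rfl⟩ := Finset.card_eq_one.mp hBcard
      simp only [Finset.mem_singleton] at hiB
      subst hiB
      exact hBS
    have := hb _ (hsing 0) _ (hsing 1)
    have heq : symmDiff ({0} : Finset (Fin 2)) {1} = Finset.univ := by decide
    rwa [heq] at this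
  · have heq := Finset.eq_univ_of_card A0 (by rw [h]; simp)
    rwa [heq] at hA0

lemma code1 (S : Set (Finset (Fin 1)))
    (ha : ∃ A ∈ S, A ≠ ∅) :
    Finset.univ ∈ S := by
  obtain ⟨A0, hA0, hA0ne⟩ := ha
  have hcard_pos : 1 ≤ A0.card := Finset.card_pos.mpr (Finset.nonempty_iff_ne_empty.mpr hA0ne)
  have hcard_le : A0.card ≤ 1 := by
    have := Finset.card_le_univ A0; simpa using this
  have : A0.card = 1 := le_antisymm hcard_le hcard_pos
  have heq := Finset.eq_univ_of_card A0 (by rw [this]; simp)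
  rwa [heq] at hA0

end Codes

section Aux5
variable {m : ℕ} {G : Subgroup (Equiv.Perm (Fin m))}

lemma trans3 (hmin : ∀ k < m, ∀ φ : G →* Equiv.Perm (Fin k), ¬ Function.Injective φ)
    (z : Equiv.Perm (Fin m)) (h2 : ∀ p, z (z p) = p)
    (Δ : Set (Fin m))
    (hGinv : ∀ (τ : G) p, p ∈ Δ → (τ : Equiv.Perm (Fin m)) p ∈ Δ)
    (hcomm : ∀ (τ : G) (p : Fin m), (τ : Equiv.Perm (Fin m)) (z p) = z ((τ : Equiv.Perm (Fin m)) p))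
    (hzinv : ∀ p ∈ Δ, z p ∈ Δ) (hmov : ∀ p ∈ Δ, z p ≠ p)
    (r : Fin 3 → Fin m)
    (hrΔ : ∀ i, r i ∈ Δ)
    (hdist : ∀ i j, i ≠ j → r j ≠ r i ∧ r j ≠ z (r i))
    (hcover : ∀ p ∈ Δ, ∃ i, p = r i ∨ p = z (r i)) :
    zres z Δ h2 hzinv ∈ G := by
  classical
  -- uniqueness of pair index
  have hUniq : ∀ (i j : Fin 3) (p : Fin m), (p = r i ∨ p = z (r i)) → (p = r j ∨ p = z (r j)) → i = j := by
    intro i j p hi hj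
    by_contra hne
    rcases hi with hi | hi <;> rcases hj with hj | hj
    · exact (hdist i j hne).1 (hj.symm.trans hi)
    · exact (hdist j i (Ne.symm hne)).2 (hi.symm.trans hj)
    · exact (hdist i j hne).2 (hj.symm.trans hi)
    · exact (hdist i j hne).1 (z.injective (hj.symm.trans hi) ▸ rfl)
  set CSet : (Fin 3 → Fin m) → Finset (Fin m) := fun c => Finset.image c Finset.univ with hCSet
  set Al : (Fin 3 → Fin m) → Prop := fun c => ∀ i, c i = r i ∨ c i = z (r i) with hAl
  have hAl_z : ∀ c, Al c → Al (z ∘ c) := by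
    intro c hc i
    rcases hc i with h | h
    · right; rw [comp_apply, h]
    · left; rw [comp_apply, h, h2]
  have hzz_c : ∀ c : Fin 3 → Fin m, (z ∘ (z ∘ c)) = c := by
    intro c; funext i; simp [h2]
  -- membership in CSet for aligned functions
  have hmemC : ∀ c, Al c → ∀ (j : Fin 3) (q : Fin m), q ∈ CSet c → (q = r j ∨ q = z (r j)) → q = c j := by
    intro c hc j q hq hpair
    simp only [hCSet, Finset.mem_image, Finset.mem_univ, true_and] at hq
    obtain ⟨t, rfl⟩ := hq
    have : t = j := by
      apply hUniq t j (c t) ?_ ?_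
      · rcases hc t with h | h
        · left; exact h
        · right; exact h
      · exact hpair
    rw [this]
  have hmemC' : ∀ c (j : Fin 3), c j ∈ CSet c := by
    intro c j
    simp only [hCSet, Finset.mem_image, Finset.mem_univ, true_and]
    exact ⟨j, rfl⟩
  -- the action on classes
  have hsmul_CSet : ∀ (τ : G) (c : Fin 3 → Fin m),
      τ • CSet c = CSet (fun i => (τ : Equiv.Perm (Fin m)) (c i)) := by
    intro τ c
    ext q
    simp only [hCSet, Finset.mem_smul_finset, Finset.mem_image, Finset.mem_univ, true_and]
    constructor
    · rintro ⟨y, ⟨i, rfl⟩, rfl⟩; exact ⟨i, rfl⟩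
    · rintro ⟨i, rfl⟩; exact ⟨c i, ⟨i, rfl⟩, rfl⟩
  set TT : Set (Finset (Finset (Fin m))) := { A | ∃ c, Al c ∧ A = {CSet c, CSet (z ∘ c)} } with hTT
  -- index transport for an element of G
  have hιex : ∀ (ξ : G) (l : Fin 3), ∃ k, (ξ : Equiv.Perm (Fin m)) (r l) = r k ∨
      (ξ : Equiv.Perm (Fin m)) (r l) = z (r k) := by
    intro ξ l
    obtain ⟨k, hk⟩ := hcover _ (hGinv ξ _ (hrΔ l))
    exact ⟨k, by tauto⟩
  have hι_inj : ∀ (ξ : G) (ι : Fin 3 → Fin 3),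
      (∀ l, (ξ : Equiv.Perm (Fin m)) (r l) = r (ι l) ∨ (ξ : Equiv.Perm (Fin m)) (r l) = z (r (ι l))) →
      Function.Injective ι := by
    intro ξ ι hι l1 l2 heq
    by_contra hne'
    have h1 := hι l1
    have h2' := hι l2
    rw [heq] at h1
    have hor : (ξ : Equiv.Perm (Fin m)) (r l1) = (ξ : Equiv.Perm (Fin m)) (r l2) ∨
        (ξ : Equiv.Perm (Fin m)) (r l1) = z ((ξ : Equiv.Perm (Fin m)) (r l2)) ∨
        z ((ξ : Equiv.Perm (Fin m)) (r l1)) = (ξ : Equiv.Perm (Fin m)) (r l2) := by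
      rcases h1 with h1 | h1 <;> rcases h2' with h2'' | h2''
      · left; rw [h1, h2'']
      · right; left; rw [h1, h2'', h2]
      · right; left; rw [h1, h2'']
      · left; rw [h1, h2'']
    rcases hor with h | h | h
    · have := (ξ : Equiv.Perm (Fin m)).injective h
      exact (hdist l2 l1 (Ne.symm hne')).1 (by rw [this])
    · rw [← hcomm] at h
      have := (ξ : Equiv.Perm (Fin m)).injective h
      exact (hdist l2 l1 (Ne.symm hne')).2 (by rw [this])
    · rw [← hcomm] at h
      have := (ξ : Equiv.Perm (Fin m)).injective h
      exact (hdist l1 l2 hne').2 (by rw [← this])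
  -- closure of TT under the action
  have hclosure : ∀ (τ : G), ∀ A ∈ TT, τ • A ∈ TT := by
    rintro τ A ⟨c, hc, rfl⟩
    choose ι hι using hιex τ
    have hinj := hι_inj τ ι hι
    have hbij : Function.Bijective ι := (Finite.injective_iff_bijective).mp hinj
    set ιe := Equiv.ofBijective ι hbij with hιe
    set c' : Fin 3 → Fin m := fun j => (τ : Equiv.Perm (Fin m)) (c (ιe.symm j)) with hc'
    have halc' : Al c' := by
      intro j
      have hspec := hι (ιe.symm j)
      have hj : ι (ιe.symm j) = j := ιe.apply_symm_apply j
      rw [hj] at hspec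
      show (τ : Equiv.Perm (Fin m)) (c (ιe.symm j)) = r j ∨
        (τ : Equiv.Perm (Fin m)) (c (ιe.symm j)) = z (r j)
      rcases hc (ιe.symm j) with h | h
      · rw [h]; exact hspec
      · rw [h, hcomm]
        rcases hspec with h' | h'
        · right; rw [h']
        · left; rw [h', h2]
    refine ⟨c', halc', ?_⟩
    have himg : ∀ d : Fin 3 → Fin m, CSet (fun j => d (ιe.symm j)) = CSet d := by
      intro d
      ext q
      simp only [hCSet, Finset.mem_image, Finset.mem_univ, true_and]
      constructor
      · rintro ⟨i, rfl⟩; exact ⟨ιe.symm i, rfl⟩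
      · rintro ⟨i, rfl⟩; exact ⟨ιe i, by rw [ιe.symm_apply_apply]⟩
    rw [Finset.smul_finset_insert, Finset.smul_finset_singleton]
    congr 1
    · rw [hsmul_CSet]
      have : c' = fun j => (τ : Equiv.Perm (Fin m)) (c (ιe.symm j)) := rfl
      rw [this, ← himg (fun i => (τ : Equiv.Perm (Fin m)) (c i))]
    · rw [hsmul_CSet]
      congr 1
      have hzc' : (z ∘ c') = fun j => (τ : Equiv.Perm (Fin m)) ((z ∘ c) (ιe.symm j)) := by
        funext j
        simp only [comp_apply, hc', hcomm]
      rw [hzc', ← himg (fun i => (τ : Equiv.Perm (Fin m)) ((z ∘ c) i))]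
  set X : SubMulAction G (Finset (Finset (Fin m))) :=
    { carrier := TT
      smul_mem' := fun τ {A} hA => hclosure τ A hA } with hX
  haveI : Fintype X := Fintype.ofFinite _
  -- normalized representative
  have hnorm : ∀ A : X, ∃ c, Al c ∧ c 0 = r 0 ∧ (A : Finset (Finset (Fin m))) = {CSet c, CSet (z ∘ c)} := by
    rintro ⟨A, ⟨c, hc, rfl⟩⟩
    rcases hc 0 with h0 | h0
    · exact ⟨c, hc, h0, rfl⟩
    · refine ⟨z ∘ c, hAl_z c hc, by rw [comp_apply, h0, h2], ?_⟩
      rw [hzz_c]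
      simp only [Finset.pair_comm]
  -- card X ≤ 4
  have hcardX : Fintype.card X ≤ 4 := by
    have hinj : Function.Injective (fun A : X =>
        ((decide (∃ T ∈ (A : Finset (Finset (Fin m))), r 0 ∈ T ∧ r 1 ∈ T),
          decide (∃ T ∈ (A : Finset (Finset (Fin m))), r 0 ∈ T ∧ r 2 ∈ T)) : Bool × Bool)) := by
      intro A A' heq
      obtain ⟨c, hc, hc0, hA⟩ := hnorm A
      obtain ⟨c', hc', hc0', hA'⟩ := hnorm A'
      simp only [Prod.mk.injEq, decide_eq_decide] at heq
      -- the flags characterize c 1 = r 1 and c 2 = r 2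
      have hflag : ∀ (d : Fin 3 → Fin m), Al d → d 0 = r 0 → ∀ s : Fin 3, s ≠ 0 →
          ((∃ T ∈ ({CSet d, CSet (z ∘ d)} : Finset (Finset (Fin m))), r 0 ∈ T ∧ r s ∈ T) ↔ d s = r s) := by
        intro d hd hd0 s hs
        constructor
        · rintro ⟨T, hT, h0T, hsT⟩
          rcases Finset.mem_insert.mp hT with rfl | hT
          · have := hmemC d hd s (r s) hsT (Or.inl rfl)
            exact this.symm
          · simp only [Finset.mem_singleton] at hT
            subst hT
            exfalso
            have := hmemC (z ∘ d) (hAl_z d hd) 0 (r 0) h0T (Or.inl rfl)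
            rw [comp_apply, hd0] at this
            exact hmov _ (hrΔ 0) this.symm
        · intro hds
          refine ⟨CSet d, Finset.mem_insert_self _ _, ?_, ?_⟩
          · rw [← hd0]; exact hmemC' d 0
          · rw [← hds]; exact hmemC' d s
      have h1 : c 1 = r 1 ↔ c' 1 = r 1 := by
        rw [← hflag c hc hc0 1 (by decide), ← hflag c' hc' hc0' 1 (by decide), ← hA, ← hA']
        exact heq.1
      have h2' : c 2 = r 2 ↔ c' 2 = r 2 := by
        rw [← hflag c hc hc0 2 (by decide), ← hflag c' hc' hc0' 2 (by decide), ← hA, ← hA']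
        exact heq.2
      have hcc : c = c' := by
        have hbin : ∀ s : Fin 3, (c s = r s ↔ c' s = r s) → c s = c' s := by
          intro s hiff
          rcases hc s with h | h <;> rcases hc' s with h' | h'
          · rw [h, h']
          · exfalso
            have hh := hiff.mp h
            rw [h'] at hh
            exact hmov _ (hrΔ s) hh
          · exfalso
            have hh := hiff.mpr h'
            rw [h] at hh
            exact hmov _ (hrΔ s) hh
          · rw [h, h']
        funext i
        fin_cases i
        · show c 0 = c' 0
          rw [hc0, hc0']
        · show c 1 = c' 1
          exact hbin 1 h1
        · show c 2 = c' 2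
          exact hbin 2 h2'
      apply Subtype.ext
      rw [hA, hA', hcc]
    calc Fintype.card X ≤ Fintype.card (Bool × Bool) := Fintype.card_le_of_injective _ hinj
    _ = 4 := by simp
  -- distinctness helpers
  have hrr : ∀ i j : Fin 3, i ≠ j → r i ≠ r j := fun i j h => (hdist j i (Ne.symm h)).1
  have hrz : ∀ i j : Fin 3, r i ≠ z (r j) := by
    intro i j
    by_cases h : i = j
    · subst h; exact fun hc => hmov _ (hrΔ i) hc.symm
    · exact (hdist j i (Ne.symm h)).2
  have hzz' : ∀ i j : Fin 3, i ≠ j → z (r i) ≠ z (r j) := fun i j h hc => hrr i j h (z.injective hc)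
  have hzr : ∀ i j : Fin 3, z (r i) ≠ r j := fun i j => (hrz j i).symm
  -- the outside sub-action
  set Out : SubMulAction G (Fin m) :=
    { carrier := Δᶜ
      smul_mem' := by
        intro τ p hp hc
        apply hp
        have hc' : (τ : Equiv.Perm (Fin m)) p ∈ Δ := hc
        have := hGinv τ⁻¹ _ hc'
        simpa using this } with hOut
  haveI : Fintype Out := Fintype.ofFinite _
  haveI : Fintype (Δ : Set (Fin m)) := Fintype.ofFinite _
  -- six distinct elements inside Δ
  have hcardΔ : 6 ≤ Fintype.card (Δ : Set (Fin m)) := by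
    have c1 : ({z (r 2)} : Finset (Fin m)).card = 1 := Finset.card_singleton _
    have c2 : ({z (r 1), z (r 2)} : Finset (Fin m)).card = 2 := by
      rw [Finset.card_insert_of_notMem (by
        simp only [Finset.mem_singleton]; exact hzz' 1 2 (by decide)), c1]
    have c3 : ({z (r 0), z (r 1), z (r 2)} : Finset (Fin m)).card = 3 := by
      rw [Finset.card_insert_of_notMem (by
        simp only [Finset.mem_insert, Finset.mem_singleton]; push_neg
        exact ⟨hzz' 0 1 (by decide), hzz' 0 2 (by decide)⟩), c2]
    have c4 : ({r 2, z (r 0), z (r 1), z (r 2)} : Finset (Fin m)).card = 4 := by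
      rw [Finset.card_insert_of_notMem (by
        simp only [Finset.mem_insert, Finset.mem_singleton]; push_neg
        exact ⟨hrz 2 0, hrz 2 1, hrz 2 2⟩), c3]
    have c5 : ({r 1, r 2, z (r 0), z (r 1), z (r 2)} : Finset (Fin m)).card = 5 := by
      rw [Finset.card_insert_of_notMem (by
        simp only [Finset.mem_insert, Finset.mem_singleton]; push_neg
        exact ⟨hrr 1 2 (by decide), hrz 1 0, hrz 1 1, hrz 1 2⟩), c4]
    have c6 : ({r 0, r 1, r 2, z (r 0), z (r 1), z (r 2)} : Finset (Fin m)).card = 6 := by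
      rw [Finset.card_insert_of_notMem (by
        simp only [Finset.mem_insert, Finset.mem_singleton]; push_neg
        exact ⟨hrr 0 1 (by decide), hrr 0 2 (by decide), hrz 0 0, hrz 0 1, hrz 0 2⟩), c5]
    have hsub : ({r 0, r 1, r 2, z (r 0), z (r 1), z (r 2)} : Finset (Fin m)) ⊆ Δ.toFinset := by
      intro q hq
      rw [Set.mem_toFinset]
      simp only [Finset.mem_insert, Finset.mem_singleton] at hq
      rcases hq with rfl | rfl | rfl | rfl | rfl | rfl
      · exact hrΔ 0
      · exact hrΔ 1
      · exact hrΔ 2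
      · exact hzinv _ (hrΔ 0)
      · exact hzinv _ (hrΔ 1)
      · exact hzinv _ (hrΔ 2)
    calc 6 = ({r 0, r 1, r 2, z (r 0), z (r 1), z (r 2)} : Finset (Fin m)).card := c6.symm
    _ ≤ Δ.toFinset.card := Finset.card_le_card hsub
    _ = Fintype.card (Δ : Set (Fin m)) := Set.toFinset_card Δ
  have hΔle : Fintype.card (Δ : Set (Fin m)) ≤ m := by
    have hinj : Function.Injective (fun x : (Δ : Set (Fin m)) => (x : Fin m)) :=
      fun a b hab => Subtype.ext hab
    have := Fintype.card_le_of_injective _ hinj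
    simpa using this
  have hcardOut : Fintype.card Out = m - Fintype.card (Δ : Set (Fin m)) := by
    have h1 : Fintype.card Out = Fintype.card {p : Fin m // ¬ p ∈ Δ} :=
      Fintype.card_congr (Equiv.subtypeEquivRight (fun p => Iff.rfl))
    have h2x := Fintype.card_subtype_compl (fun p : Fin m => p ∈ Δ)
    rw [h1, h2x, Fintype.card_fin]
  have htot : Fintype.card (X ⊕ Out) < m := by
    rw [Fintype.card_sum, hcardOut]
    omega
  set ρ : G →* Equiv.Perm (X ⊕ Out) :=
    (Equiv.Perm.sumCongrHom _ _).comp ((MulAction.toPermHom G X).prod (MulAction.toPermHom G Out)) with hρ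
  obtain ⟨ξ, hξne, hξk⟩ := small_kernel hmin ρ htot
  set xp : Equiv.Perm (Fin m) := (ξ : Equiv.Perm (Fin m)) with hxp
  have hfixX : ∀ A : X, ξ • A = A := by
    intro A
    have h0 := congrArg (fun σ : Equiv.Perm (X ⊕ Out) => σ (Sum.inl A)) hξk
    simp only [hρ, MonoidHom.comp_apply, MonoidHom.prod_apply, Equiv.Perm.sumCongrHom_apply,
      Equiv.sumCongr_apply, Sum.map_inl, Equiv.Perm.coe_one, id_eq, MulAction.toPermHom_apply] at h0
    exact Sum.inl_injective h0
  have hfixOut : ∀ (p : Fin m), p ∉ Δ → xp p = p := by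
    intro p hp
    have h0 := congrArg (fun σ : Equiv.Perm (X ⊕ Out) => σ (Sum.inr ⟨p, hp⟩)) hξk
    simp only [hρ, MonoidHom.comp_apply, MonoidHom.prod_apply, Equiv.Perm.sumCongrHom_apply,
      Equiv.sumCongr_apply, Sum.map_inr, Equiv.Perm.coe_one, id_eq, MulAction.toPermHom_apply] at h0
    have h1 := Sum.inr_injective h0
    have h2' := congrArg Subtype.val h1
    exact h2'
  -- induced pair permutation
  choose π hπ using hιex ξ
  have hπinj := hι_inj ξ π hπ
  have hπbij : Function.Bijective π := (Finite.injective_iff_bijective).mp hπinj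
  set πe := Equiv.ofBijective π hπbij with hπe
  have happly : ∀ s, π (πe.symm s) = s := fun s => πe.apply_symm_apply s
  have pairval : ∀ c, Al c → ∀ l, xp (c l) = r (π l) ∨ xp (c l) = z (r (π l)) := by
    intro c hc l
    rcases hc l with h | h
    · rw [h]; exact hπ l
    · rw [h, hcomm ξ]
      rcases hπ l with h' | h'
      · right; rw [h']
      · left; rw [h', h2]
  have hclassfix : ∀ c, Al c →
      CSet (fun l => xp (c l)) = CSet c ∨ CSet (fun l => xp (c l)) = CSet (z ∘ c) := by
    intro c hc
    have hA : ({CSet c, CSet (z ∘ c)} : Finset (Finset (Fin m))) ∈ TT := ⟨c, hc, rfl⟩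
    have hfix := hfixX ⟨{CSet c, CSet (z ∘ c)}, hA⟩
    have hval := congrArg Subtype.val hfix
    rw [SubMulAction.val_smul] at hval
    simp only [Finset.smul_finset_insert, Finset.smul_finset_singleton] at hval
    rw [hsmul_CSet, hsmul_CSet] at hval
    have hmem : CSet (fun l => xp (c l)) ∈ ({CSet c, CSet (z ∘ c)} : Finset (Finset (Fin m))) := by
      rw [← hval]
      exact Finset.mem_insert_self _ _
    rcases Finset.mem_insert.mp hmem with h | h
    · exact Or.inl h
    · exact Or.inr (by simpa using h)
  have ext_pt : ∀ c c', Al c → Al c' → CSet (fun l => xp (c l)) = CSet c' →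
      ∀ s, xp (c (πe.symm s)) = c' s := by
    intro c c' hc hc' heq s
    have hq : xp (c (πe.symm s)) ∈ CSet c' := by
      rw [← heq]
      exact hmemC' (fun l => xp (c l)) (πe.symm s)
    have hpair := pairval c hc (πe.symm s)
    rw [happly s] at hpair
    exact hmemC c' hc' s _ hq hpair
  -- π is the identity
  have hπid : ∀ i, π i = i := by
    intro i
    by_contra hne
    have hij : π i ≠ i := hne
    obtain ⟨k, hki, hkj⟩ : ∃ k : Fin 3, k ≠ i ∧ k ≠ π i := by
      have : ∀ a b : Fin 3, a ≠ b → ∃ k : Fin 3, k ≠ b ∧ k ≠ a := by decide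
      exact this (π i) i hij
    have hAlc0 : Al r := fun l => Or.inl rfl
    set ci : Fin 3 → Fin m := fun l => if l = i then z (r i) else r l with hci
    have hAlci : Al ci := by
      intro l
      by_cases h : l = i
      · subst h; right; simp [hci]
      · left; simp [hci, h]
    have hsymmj : πe.symm (π i) = i := πe.symm_apply_apply i
    have hsymmki : πe.symm k ≠ i := by
      intro hc
      apply hkj
      rw [← happly k, hc]
    have hcik : ci k = r k := by simp [hci, hki]
    have hcij : ci (π i) = r (π i) := by
      simp only [hci]
      rw [if_neg]
      intro hc
      exact hij (by rw [hc])
    have hcii : ci i = z (r i) := by simp [hci]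
    rcases hclassfix r hAlc0 with hα | hβ
    · have E0 := ext_pt r r hAlc0 hAlc0 hα
      rcases hclassfix ci hAlci with hα' | hβ'
      · have Ej := ext_pt ci ci hAlci hAlci hα' (π i)
        rw [hsymmj, hcii, hcij] at Ej
        have hE0j := E0 (π i)
        rw [hsymmj] at hE0j
        exact hmov _ (hrΔ i) (xp.injective (Ej.trans hE0j.symm))
      · have Ek := ext_pt ci (z ∘ ci) hAlci (hAl_z _ hAlci) hβ' k
        have hlhs : ci (πe.symm k) = r (πe.symm k) := by simp [hci, hsymmki]
        rw [hlhs, comp_apply, hcik] at Ek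
        have hE0k := E0 k
        rw [Ek] at hE0k
        exact hmov _ (hrΔ k) hE0k
    · have E0 := ext_pt r (z ∘ r) hAlc0 (hAl_z _ hAlc0) hβ
      rcases hclassfix ci hAlci with hα' | hβ'
      · have Ek := ext_pt ci ci hAlci hAlci hα' k
        have hlhs : ci (πe.symm k) = r (πe.symm k) := by simp [hci, hsymmki]
        rw [hlhs, hcik] at Ek
        have hE0k := E0 k
        rw [comp_apply] at hE0k
        rw [Ek] at hE0k
        exact hmov _ (hrΔ k) hE0k.symm
      · have Ej := ext_pt ci (z ∘ ci) hAlci (hAl_z _ hAlci) hβ' (π i)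
        rw [hsymmj, hcii, comp_apply, hcij] at Ej
        have hE0j := E0 (π i)
        rw [hsymmj, comp_apply] at hE0j
        exact hmov _ (hrΔ i) (xp.injective (Ej.trans hE0j.symm))
  have hsymm_id : ∀ s, πe.symm s = s := by
    intro s
    apply πe.injective
    rw [πe.apply_symm_apply]
    show s = π s
    rw [hπid s]
  have hAlc0 : Al r := fun l => Or.inl rfl
  rcases hclassfix r hAlc0 with hα | hβ
  · exfalso
    have E0 := ext_pt r r hAlc0 hAlc0 hα
    apply hξne
    apply Subtype.ext
    show xp = 1
    apply Equiv.ext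
    intro p
    simp only [Equiv.Perm.coe_one, id_eq]
    by_cases hp : p ∈ Δ
    · obtain ⟨i, hi⟩ := hcover p hp
      have hri : xp (r i) = r i := by
        have := E0 i; rwa [hsymm_id i] at this
      rcases hi with rfl | rfl
      · exact hri
      · rw [hcomm ξ, hri]
    · exact hfixOut p hp
  · have E0 := ext_pt r (z ∘ r) hAlc0 (hAl_z _ hAlc0) hβ
    have hxz : xp = zres z Δ h2 hzinv := by
      apply Equiv.ext
      intro p
      rw [zres_apply]
      by_cases hp : p ∈ Δ
      · rw [if_pos hp]
        obtain ⟨i, hi⟩ := hcover p hp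
        have hri : xp (r i) = z (r i) := by
          have := E0 i; rwa [hsymm_id i, comp_apply] at this
        rcases hi with rfl | rfl
        · exact hri
        · rw [hcomm ξ, hri]
      · rw [if_neg hp]
        exact hfixOut p hp
    rw [← hxz]
    exact ξ.2

end Aux5

section Aux6
variable {m : ℕ} {G : Subgroup (Equiv.Perm (Fin m))}

/-- the per-orbit step -/
lemma orb_step (hm : m ≤ 9)
    (hmin : ∀ k < m, ∀ φ : G →* Equiv.Perm (Fin k), ¬ Function.Injective φ)
    (z : Equiv.Perm (Fin m)) (h2 : ∀ p, z (z p) = p)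
    (hcomm : ∀ (τ : G) (p : Fin m), (τ : Equiv.Perm (Fin m)) (z p) = z ((τ : Equiv.Perm (Fin m)) p))
    (x : Fin m) (hx : z x ≠ x) :
    ∃ (Δ : Set (Fin m)) (hzinv : ∀ p ∈ Δ, z p ∈ Δ),
      x ∈ Δ ∧ (∀ p ∈ Δ, z p ≠ p) ∧ (∀ (τ : G) p, p ∈ Δ → (τ : Equiv.Perm (Fin m)) p ∈ Δ) ∧
      zres z Δ h2 hzinv ∈ G := by
  classical
  set Δ : Set (Fin m) := MulAction.orbit G x ∪ MulAction.orbit G (z x) with hΔ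
  have horb : ∀ p, p ∈ Δ ↔ (∃ σ : G, (σ : Equiv.Perm (Fin m)) x = p) ∨
      (∃ σ : G, (σ : Equiv.Perm (Fin m)) (z x) = p) := by
    intro p
    simp only [hΔ, Set.mem_union, MulAction.mem_orbit_iff]
    rfl
  have hxΔ : x ∈ Δ := (horb x).mpr (Or.inl ⟨1, rfl⟩)
  have hGinv : ∀ (τ : G) p, p ∈ Δ → (τ : Equiv.Perm (Fin m)) p ∈ Δ := by
    intro τ p hp
    rcases (horb p).mp hp with ⟨σ, rfl⟩ | ⟨σ, rfl⟩
    · exact (horb _).mpr (Or.inl ⟨τ * σ, rfl⟩)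
    · exact (horb _).mpr (Or.inr ⟨τ * σ, rfl⟩)
  have hzinv : ∀ p ∈ Δ, z p ∈ Δ := by
    intro p hp
    rcases (horb p).mp hp with ⟨σ, rfl⟩ | ⟨σ, rfl⟩
    · exact (horb _).mpr (Or.inr ⟨σ, hcomm σ x⟩)
    · refine (horb _).mpr (Or.inl ⟨σ, ?_⟩)
      rw [← hcomm σ (z x), h2]
  have hmov : ∀ p ∈ Δ, z p ≠ p := by
    intro p hp
    rcases (horb p).mp hp with ⟨σ, rfl⟩ | ⟨σ, rfl⟩
    · rw [← hcomm σ x]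
      intro hc
      exact hx ((σ : Equiv.Perm (Fin m)).injective hc)
    · rw [← hcomm σ (z x), h2]
      intro hc
      exact hx (((σ : Equiv.Perm (Fin m)).injective hc).symm)
  have hσ : ∀ p ∈ Δ, ∃ σ : G, (σ : Equiv.Perm (Fin m)) x = p ∨ (σ : Equiv.Perm (Fin m)) x = z p := by
    intro p hp
    rcases (horb p).mp hp with ⟨σ, rfl⟩ | ⟨σ, rfl⟩
    · exact ⟨σ, Or.inl rfl⟩
    · refine ⟨σ, Or.inr ?_⟩
      rw [← hcomm σ (z x), h2]
  have htrans : ∀ p q, p ∈ Δ → q ∈ Δ →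
      ∃ τ : G, (τ : Equiv.Perm (Fin m)) p = q ∨ (τ : Equiv.Perm (Fin m)) p = z q := by
    intro p q hp hq
    obtain ⟨σp, hσp⟩ := hσ p hp
    obtain ⟨σq, hσq⟩ := hσ q hq
    refine ⟨σq * σp⁻¹, ?_⟩
    have hinvp : (σp⁻¹ : G) = σp⁻¹ := rfl
    rcases hσp with hσp | hσp
    · have hx' : ((σp⁻¹ : G) : Equiv.Perm (Fin m)) p = x := by
        rw [← hσp]
        simp
      have : ((σq * σp⁻¹ : G) : Equiv.Perm (Fin m)) p = (σq : Equiv.Perm (Fin m)) x := by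
        simp only [Subgroup.coe_mul, Equiv.Perm.mul_apply]
        rw [hx']
      rw [this]
      exact hσq
    · have hx' : ((σp⁻¹ : G) : Equiv.Perm (Fin m)) (z p) = x := by
        rw [← hσp]
        simp
      have hkey : ((σq * σp⁻¹ : G) : Equiv.Perm (Fin m)) (z p) = (σq : Equiv.Perm (Fin m)) x := by
        simp only [Subgroup.coe_mul, Equiv.Perm.mul_apply]
        rw [hx']
      rw [hcomm (σq * σp⁻¹) p] at hkey
      rcases hσq with hσq | hσq
      · rw [hσq] at hkey
        right
        have := congrArg z hkey
        rwa [h2] at this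
      · rw [hσq] at hkey
        left
        have := congrArg z hkey
        rwa [h2, h2] at this
  -- finite transversal
  haveI : Fintype (Δ : Set (Fin m)) := Fintype.ofFinite _
  set D := Δ.toFinset with hD
  have hDmem : ∀ p, p ∈ D ↔ p ∈ Δ := fun p => Set.mem_toFinset
  have hDprop : ∀ p ∈ D, z p ∈ D ∧ z p ≠ p := by
    intro p hp
    rw [hDmem] at hp
    exact ⟨(hDmem _).mpr (hzinv p hp), hmov p hp⟩
  obtain ⟨R, hR1, hR2, hR3, hR4⟩ := exists_transversal z h2 D hDprop
  set r : Fin R.card → Fin m := fun i => ((R.equivFin.symm i) : Fin m) with hr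
  have hrR : ∀ i, r i ∈ R := fun i => (R.equivFin.symm i).2
  have hrΔ : ∀ i, r i ∈ Δ := fun i => (hDmem _).mp (hR1 (hrR i))
  have hrinj : Function.Injective r :=
    fun i j hij => R.equivFin.symm.injective (Subtype.ext hij)
  have hdist : ∀ i j, i ≠ j → r j ≠ r i ∧ r j ≠ z (r i) := by
    intro i j hij
    constructor
    · intro hc
      exact hij (hrinj hc).symm
    · intro hc
      exact hR2 (r i) (hrR i) (hc ▸ hrR j)
  have hcover : ∀ p ∈ Δ, ∃ i, p = r i ∨ p = z (r i) := by
    intro p hp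
    rcases hR3 p ((hDmem p).mpr hp) with h | h
    · refine ⟨R.equivFin ⟨p, h⟩, Or.inl ?_⟩
      simp [hr]
    · refine ⟨R.equivFin ⟨z p, h⟩, Or.inr ?_⟩
      have : r (R.equivFin ⟨z p, h⟩) = z p := by simp [hr]
      rw [this, h2]
  obtain ⟨x0, hx0G, hx0ne, hx0out, hx0in⟩ :=
    collapse_kernel hmin z h2 Δ hGinv hcomm hzinv hmov x hxΔ
  have hn1 : 1 ≤ R.card := by
    have hxD : x ∈ D := (hDmem x).mpr hxΔ
    have : 1 ≤ D.card := Finset.card_pos.mpr ⟨x, hxD⟩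
    omega
  have hn4 : R.card ≤ 4 := by
    have h1 : D.card ≤ m := by
      have := Finset.card_le_univ D
      simpa using this
    omega
  refine ⟨Δ, hzinv, hxΔ, hmov, hGinv, ?_⟩
  have hcase : R.card = 1 ∨ R.card = 2 ∨ R.card = 3 ∨ R.card = 4 := by omega
  rcases hcase with h | h | h | h
  · -- n = 1
    set e := finCongr h
    exact bridge z h2 Δ hGinv hcomm hzinv hmov (r ∘ e.symm)
      (fun i => hrΔ _)
      (fun i j hij => hdist _ _ (fun hc => hij (e.symm.injective hc)))
      (fun p hp => by
        obtain ⟨i, hi⟩ := hcover p hp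
        exact ⟨e i, by simpa using hi⟩)
      htrans x0 hx0G hx0ne hx0out hx0in
      (fun S hb ha hc => code1 S ha)
  · set e := finCongr h
    exact bridge z h2 Δ hGinv hcomm hzinv hmov (r ∘ e.symm)
      (fun i => hrΔ _)
      (fun i j hij => hdist _ _ (fun hc => hij (e.symm.injective hc)))
      (fun p hp => by
        obtain ⟨i, hi⟩ := hcover p hp
        exact ⟨e i, by simpa using hi⟩)
      htrans x0 hx0G hx0ne hx0out hx0in code2
  · set e := finCongr h
    exact trans3 hmin z h2 Δ hGinv hcomm hzinv hmov (r ∘ e.symm)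
      (fun i => hrΔ _)
      (fun i j hij => hdist _ _ (fun hc => hij (e.symm.injective hc)))
      (fun p hp => by
        obtain ⟨i, hi⟩ := hcover p hp
        exact ⟨e i, by simpa using hi⟩)
  · set e := finCongr h
    exact bridge z h2 Δ hGinv hcomm hzinv hmov (r ∘ e.symm)
      (fun i => hrΔ _)
      (fun i j hij => hdist _ _ (fun hc => hij (e.symm.injective hc)))
      (fun p hp => by
        obtain ⟨i, hi⟩ := hcover p hp
        exact ⟨e i, by simpa using hi⟩)
      htrans x0 hx0G hx0ne hx0out hx0in code4

/-- main induction on the support -/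
lemma main_ind (hm : m ≤ 9)
    (hmin : ∀ k < m, ∀ φ : G →* Equiv.Perm (Fin k), ¬ Function.Injective φ) :
    ∀ (N : ℕ) (z : Equiv.Perm (Fin m)),
      (Finset.univ.filter (fun p => z p ≠ p)).card ≤ N →
      (∀ (τ : G) (p : Fin m), (τ : Equiv.Perm (Fin m)) (z p) = z ((τ : Equiv.Perm (Fin m)) p)) →
      (∀ p, z (z p) = p) → z ∈ G := by
  intro N
  induction N with
  | zero =>
    intro z hcard _ _
    have : z = 1 := by
      apply Equiv.ext
      intro p
      by_contra hc
      have : p ∈ Finset.univ.filter (fun p => z p ≠ p) := by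
        simp only [Finset.mem_filter, Finset.mem_univ, true_and]
        exact hc
      have := Finset.card_pos.mpr ⟨p, this⟩
      omega
    rw [this]
    exact one_mem G
  | succ N ih =>
    intro z hcard hcomm h2
    by_cases hz : z = 1
    · rw [hz]; exact one_mem G
    · have : ∃ x, z x ≠ x := by
        by_contra hc
        push_neg at hc
        exact hz (Equiv.ext hc)
      obtain ⟨x, hx⟩ := this
      obtain ⟨Δ, hzinv, hxΔ, hmovΔ, hGinvΔ, hw⟩ := orb_step hm hmin z h2 hcomm x hx
      set w := zres z Δ h2 hzinv with hwdef
      set z' := z * w with hz'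
      have hz'app : ∀ p, z' p = if p ∈ Δ then p else z p := by
        intro p
        rw [hz']
        simp only [Equiv.Perm.mul_apply]
        rw [zres_apply]
        by_cases hp : p ∈ Δ
        · rw [if_pos hp, if_pos hp, h2]
        · rw [if_neg hp, if_neg hp]
      have hnotin : ∀ p, p ∉ Δ → z p ∉ Δ := by
        intro p hp hc
        have := hzinv _ hc
        rw [h2] at this
        exact hp this
      have h2' : ∀ p, z' (z' p) = p := by
        intro p
        by_cases hp : p ∈ Δ
        · have h1 : z' p = p := by rw [hz'app, if_pos hp]
          rw [h1, h1]
        · have h1 : z' p = z p := by rw [hz'app, if_neg hp]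
          rw [h1, hz'app, if_neg (hnotin p hp), h2]
      have hτmem : ∀ (τ : G) p, p ∉ Δ → (τ : Equiv.Perm (Fin m)) p ∉ Δ := by
        intro τ p hp hc
        apply hp
        have := hGinvΔ τ⁻¹ _ hc
        simpa using this
      have hcomm' : ∀ (τ : G) (p : Fin m),
          (τ : Equiv.Perm (Fin m)) (z' p) = z' ((τ : Equiv.Perm (Fin m)) p) := by
        intro τ p
        by_cases hp : p ∈ Δ
        · have h1 : z' p = p := by rw [hz'app, if_pos hp]
          rw [h1, hz'app, if_pos (hGinvΔ τ p hp)]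
        · have h1 : z' p = z p := by rw [hz'app, if_neg hp]
          rw [h1, hz'app, if_neg (hτmem τ p hp), hcomm]
      have hcard' : (Finset.univ.filter (fun p => z' p ≠ p)).card ≤ N := by
        have hsub : Finset.univ.filter (fun p => z' p ≠ p) ⊆
            (Finset.univ.filter (fun p => z p ≠ p)).erase x := by
          intro p hp
          simp only [Finset.mem_filter, Finset.mem_univ, true_and] at hp
          have hpΔ : p ∉ Δ := by
            intro hc
            have h1 : z' p = p := by rw [hz'app, if_pos hc]
            exact hp h1
          have h1 : z' p = z p := by rw [hz'app, if_neg hpΔ]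
          rw [h1] at hp
          rw [Finset.mem_erase]
          refine ⟨fun hc => hpΔ (hc ▸ hxΔ), ?_⟩
          simp only [Finset.mem_filter, Finset.mem_univ, true_and]
          exact hp
        have hxmem : x ∈ Finset.univ.filter (fun p => z p ≠ p) := by
          simp only [Finset.mem_filter, Finset.mem_univ, true_and]
          exact hx
        have := Finset.card_le_card hsub
        rw [Finset.card_erase_of_mem hxmem] at this
        omega
      have hz'G : z' ∈ G := ih z' hcard' hcomm' h2'
      have hzeq : z = z' * w⁻¹ := by
        rw [hz']
        group
      rw [hzeq]
      exact mul_mem hz'G (inv_mem hw)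
end Aux6

theorem involution_in_centralizer_mem_of_le_nine (m : ℕ) (hm : m ≤ 9)
    (G : Subgroup (Equiv.Perm (Fin m)))
    (hmin : ∀ k < m, ∀ φ : G →* Equiv.Perm (Fin k), ¬ Function.Injective φ)
    (g : Equiv.Perm (Fin m))
    (hg : g ∈ Subgroup.centralizer (G : Set (Equiv.Perm (Fin m))))
    (hord : orderOf g = 2) :
    g ∈ G := by
  classical
  have hcomm : ∀ (τ : G) (p : Fin m),
      (τ : Equiv.Perm (Fin m)) (g p) = g ((τ : Equiv.Perm (Fin m)) p) := by
    intro τ p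
    have hcent := Subgroup.mem_centralizer_iff.mp hg (τ : Equiv.Perm (Fin m)) τ.2
    have happ := congrArg (fun σ : Equiv.Perm (Fin m) => σ p) hcent
    simpa [Equiv.Perm.mul_apply] using happ
  have h2 : ∀ p, g (g p) = p := by
    have hpow : g ^ 2 = 1 := by rw [← hord]; exact pow_orderOf_eq_one g
    intro p
    have := congrArg (fun σ : Equiv.Perm (Fin m) => σ p) hpow
    simpa [sq, Equiv.Perm.mul_apply] using this
  exact main_ind hm hmin _ g le_rfl hcomm h2
end

section
/- For every subgroup G of Sym(7) that is minimally embedded (i.e., G admits no injective group homomorphism into Sym(k) for any k < 7), the index of G in the join of G with the centralizer of G in Sym(7) divides 2. -/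
namespace R7
open Equiv Finset
open scoped Classical

abbrev P7 := Equiv.Perm (Fin 7)

/-- fixes everything outside s -/
def Fo (g : P7) (s : Finset (Fin 7)) : Prop := ∀ x, x ∉ s → g x = x

/-- agree on s -/
def Ag (g h : P7) (s : Finset (Fin 7)) : Prop := ∀ x ∈ s, g x = h x

lemma eq_of_fo_ag {g h : P7} {s : Finset (Fin 7)} (hg : Fo g s) (hh : Fo h s)
    (hagree : Ag g h s) : g = h := by
  refine Equiv.ext fun x => ?_
  by_cases hx : x ∈ s
  · exact hagree x hx
  · exact (hg x hx).trans (hh x hx).symm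

lemma fo_one (s : Finset (Fin 7)) : Fo 1 s := fun x _ => rfl

lemma fo_mul {g h : P7} {s : Finset (Fin 7)} (hg : Fo g s) (hh : Fo h s) : Fo (g * h) s := by
  intro x hx
  rw [Equiv.Perm.mul_apply, hh x hx, hg x hx]

lemma fo_inv {g : P7} {s : Finset (Fin 7)} (hg : Fo g s) : Fo g⁻¹ s := by
  intro x hx
  have := hg x hx
  conv_lhs => rw [← this]
  simp

lemma fo_pow {g : P7} {s : Finset (Fin 7)} (hg : Fo g s) (n : ℕ) : Fo (g ^ n) s := by
  induction n with
  | zero => simpa using fo_one s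
  | succ n ih => rw [pow_succ]; exact fo_mul ih hg

lemma inv_mem_of_fo {d : P7} {s : Finset (Fin 7)} (hfo : Fo d s) {y : Fin 7} (hy : y ∈ s) :
    d⁻¹ y ∈ s := by
  by_contra h
  have h2 := hfo _ h
  rw [show d (d⁻¹ y) = y from d.apply_symm_apply y] at h2
  rw [← h2] at h
  exact h hy

variable (G : Subgroup P7)

noncomputable def orb (x : Fin 7) : Finset (Fin 7) := univ.filter (fun y => ∃ g ∈ G, g x = y)

abbrev Cz : Subgroup P7 := Subgroup.centralizer (G : Set P7)

variable {G}

lemma mem_orb {x y : Fin 7} : y ∈ orb G x ↔ ∃ g ∈ G, g x = y := by simp [orb]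

lemma self_mem_orb (x : Fin 7) : x ∈ orb G x := mem_orb.2 ⟨1, G.one_mem, rfl⟩

lemma smul_mem_orb {g : P7} {x y : Fin 7} (hg : g ∈ G) (hy : y ∈ orb G x) :
    g y ∈ orb G x := by
  obtain ⟨h, hh, rfl⟩ := mem_orb.1 hy
  exact mem_orb.2 ⟨g * h, G.mul_mem hg hh, rfl⟩

lemma orb_eq_of_mem {x y : Fin 7} (hy : y ∈ orb G x) : orb G y = orb G x := by
  obtain ⟨h, hh, rfl⟩ := mem_orb.1 hy
  ext z
  simp only [mem_orb]
  constructor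
  · rintro ⟨g, hg, rfl⟩
    exact ⟨g * h, G.mul_mem hg hh, rfl⟩
  · rintro ⟨g, hg, rfl⟩
    refine ⟨g * h⁻¹, G.mul_mem hg (G.inv_mem hh), ?_⟩
    simp

lemma not_mem_orb_smul {g : P7} {x y : Fin 7} (hg : g ∈ G) (hy : y ∉ orb G x) :
    g y ∉ orb G x := by
  intro h
  apply hy
  have := smul_mem_orb (G.inv_mem hg) h
  simpa using this

lemma orb_eq_or_disj (x y : Fin 7) :
    orb G x = orb G y ∨ ∀ z, z ∈ orb G x → z ∉ orb G y := by
  by_cases h : ∃ z, z ∈ orb G x ∧ z ∈ orb G y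
  · obtain ⟨z, hzx, hzy⟩ := h
    exact Or.inl ((orb_eq_of_mem hzx).symm.trans (orb_eq_of_mem hzy))
  · push_neg at h
    exact Or.inr h

section WithHmin

variable (hmin : ∀ k < 7, ∀ φ : G →* Equiv.Perm (Fin k), ¬ Function.Injective φ)

include hmin

/-- no faithful action on a small invariant set -/
lemma nss (s : Finset (Fin 7)) (hcard : s.card < 7)
    (hinv : ∀ g ∈ G, ∀ x ∈ s, g x ∈ s)
    (hfaith : ∀ g ∈ G, (∀ x ∈ s, g x = x) → g = 1) : False := by
  have hiff : ∀ g : G, ∀ x : Fin 7, x ∈ s ↔ (g : P7) x ∈ s := by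
    intro g x
    refine ⟨fun h => hinv g g.2 x h, fun h => ?_⟩
    have := hinv _ (G.inv_mem g.2) _ h
    simpa using this
  let e : {x // x ∈ s} ≃ Fin s.card := s.equivFin
  let f : G → Equiv.Perm (Fin s.card) := fun g =>
    (Equiv.permCongr e) ((g : P7).subtypePerm (fun x => (hiff g x).symm))
  have hmul : ∀ a b : G, f (a * b) = f a * f b := by
    intro a b
    ext i
    simp [f, Equiv.permCongr_apply, Equiv.Perm.subtypePerm_apply, Equiv.Perm.mul_apply]
  let φ : G →* Equiv.Perm (Fin s.card) := MonoidHom.mk' f hmul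
  have hinj : Function.Injective φ := by
    rw [injective_iff_map_eq_one]
    intro g hg
    have hfix : ∀ x ∈ s, (g : P7) x = x := by
      intro x hx
      have h1 : f g (e ⟨x, hx⟩) = e ⟨x, hx⟩ := by
        show φ g (e ⟨x, hx⟩) = e ⟨x, hx⟩
        rw [hg]; rfl
      have h2 : ((g : P7).subtypePerm (fun x => (hiff g x).symm)) ⟨x, hx⟩ = ⟨x, hx⟩ := by
        apply e.injective
        simpa [f, Equiv.permCongr_apply] using h1
      simpa [Equiv.Perm.subtypePerm_apply, Subtype.ext_iff] using h2
    have : (g : P7) = 1 := hfaith g g.2 hfix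
    exact Subtype.ext this
  exact hmin s.card hcard φ hinj

lemma exists_small (x : Fin 7) : ∃ k : P7, k ∈ G ∧ k ≠ 1 ∧ Fo k (orb G x) := by
  by_contra h
  push_neg at h
  refine nss hmin (univ \ orb G x) ?_ ?_ ?_
  · have h1 : 0 < (orb G x).card := card_pos.2 ⟨x, self_mem_orb x⟩
    have h2 : (univ \ orb G x).card = 7 - (orb G x).card := by
      rw [card_sdiff_of_subset (subset_univ _)]
      simp
    omega
  · intro g hg z hz
    simp only [mem_sdiff, mem_univ, true_and] at hz ⊢
    exact not_mem_orb_smul hg hz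
  · intro g hg hfix
    by_contra hne
    refine h g hg hne fun z hz => hfix z ?_
    simp only [mem_sdiff, mem_univ, true_and]
    exact hz

lemma two_le_card_orb (x : Fin 7) : 2 ≤ (orb G x).card := by
  obtain ⟨k, hkG, hk1, hkf⟩ := exists_small hmin x
  obtain ⟨z, hz⟩ : ∃ z, k z ≠ z := by
    by_contra h
    push_neg at h
    exact hk1 (Equiv.ext h)
  have hzo : z ∈ orb G x := by
    by_contra h
    exact hz (hkf z h)
  exact one_lt_card.2 ⟨k z, smul_mem_orb hkG hzo, z, hzo, hz⟩

lemma card_orb_le (x : Fin 7) : (orb G x).card ≤ 7 := by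
  have := card_le_card (subset_univ (orb G x))
  simpa using this

lemma card_orb_ne_six (x : Fin 7) : (orb G x).card ≠ 6 := by
  intro h6
  have hc : (univ \ orb G x).card = 1 := by
    rw [card_sdiff_of_subset (subset_univ _)]
    simp [h6]
  obtain ⟨y, hy⟩ := card_eq_one.1 hc
  have hyx : y ∉ orb G x := by
    have : y ∈ univ \ orb G x := hy ▸ mem_singleton_self y
    exact (mem_sdiff.1 this).2
  have hsub : orb G y ⊆ univ \ orb G x := by
    intro z hz
    simp only [mem_sdiff, mem_univ, true_and]
    intro hzx
    exact hyx (((orb_eq_of_mem hz).symm.trans (orb_eq_of_mem hzx)) ▸ self_mem_orb y)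
  have h1 : (orb G y).card ≤ 1 := hc ▸ card_le_card hsub
  have h2 := two_le_card_orb hmin y
  omega

lemma orb_four_eq {x y : Fin 7} (hx : (orb G x).card = 4) (hy : (orb G y).card = 4) :
    orb G x = orb G y := by
  rcases orb_eq_or_disj x y with h | h
  · exact h
  · exfalso
    have hdisj : Disjoint (orb G x) (orb G y) := disjoint_left.2 (fun a ha => h a ha)
    have h1 := card_union_of_disjoint hdisj
    have h2 := card_le_card (subset_univ (orb G x ∪ orb G y))
    simp only [card_univ, Fintype.card_fin] at h2
    omega

end WithHmin

lemma comm_apply {c g : P7} (hc : c ∈ Cz G) (hg : g ∈ G) (x : Fin 7) :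
    c (g x) = g (c x) := by
  have h := (Subgroup.mem_centralizer_iff.1 hc) g hg
  calc c (g x) = (c * g) x := rfl
    _ = (g * c) x := by rw [← h]
    _ = g (c x) := rfl

section WithHmin2

variable (hmin : ∀ k < 7, ∀ φ : G →* Equiv.Perm (Fin k), ¬ Function.Injective φ)

include hmin

lemma cmem_orb {c : P7} (hc : c ∈ Cz G) {x y : Fin 7} (hy : y ∈ orb G x) :
    c y ∈ orb G x := by
  by_contra hcy
  refine nss hmin (univ \ orb G x) ?_ ?_ ?_
  · have h1 : 0 < (orb G x).card := card_pos.2 ⟨x, self_mem_orb x⟩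
    have h2 : (univ \ orb G x).card = 7 - (orb G x).card := by
      rw [card_sdiff_of_subset (subset_univ _)]
      simp
    omega
  · intro g hg z hz
    simp only [mem_sdiff, mem_univ, true_and] at hz ⊢
    exact not_mem_orb_smul hg hz
  · intro g hg hfix
    have hfix' : ∀ z, z ∉ orb G x → g z = z := by
      intro z hz
      refine hfix z ?_
      simp only [mem_sdiff, mem_univ, true_and]
      exact hz
    refine Equiv.ext fun z => ?_
    by_cases hz : z ∈ orb G x
    · have hzy : z ∈ orb G y := (orb_eq_of_mem hy).symm ▸ hz
      have hcz : c z ∈ orb G (c y) := by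
        obtain ⟨g0, hg0, rfl⟩ := mem_orb.1 hzy
        exact mem_orb.2 ⟨g0, hg0, (comm_apply hc hg0 y).symm⟩
      have hdisj : c z ∉ orb G x := by
        intro hin
        have h1 : orb G (c z) = orb G (c y) := orb_eq_of_mem hcz
        have h2 : orb G (c z) = orb G x := orb_eq_of_mem hin
        exact hcy ((h1.symm.trans h2) ▸ self_mem_orb (c y))
      have h3 : g (c z) = c z := hfix' (c z) hdisj
      have h4 : c (g z) = c z := (comm_apply hc hg z).trans h3
      exact c.injective h4
    · exact hfix' z hz

end WithHmin2

lemma semireg {c : P7} (hc : c ∈ Cz G) {x y : Fin 7} (hy : y ∈ orb G x) (hfix : c x = x) :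
    c y = y := by
  obtain ⟨g, hg, rfl⟩ := mem_orb.1 hy
  rw [comm_apply hc hg, hfix]



lemma pow_apply_mem {c : P7} {s : Finset (Fin 7)} (hinv : ∀ x ∈ s, c x ∈ s)
    {y : Fin 7} (hy : y ∈ s) (j : ℕ) : (c ^ j) y ∈ s := by
  induction j with
  | zero => simpa using hy
  | succ n ih =>
    rw [pow_succ', Equiv.Perm.mul_apply]
    exact hinv _ ih

lemma fix_mul {c : P7} {s : Finset (Fin 7)} {m : ℕ}
    (hper2 : ∀ y ∈ s, (c ^ m) y = y) (hinv : ∀ x ∈ s, c x ∈ s) :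
    ∀ q, ∀ z ∈ s, (c ^ (m * q)) z = z := by
  intro q
  induction q with
  | zero => intro z _; simp
  | succ n ih =>
    intro z hz
    have : m * (n + 1) = m * n + m := by ring
    rw [this, pow_add, Equiv.Perm.mul_apply]
    rw [hper2 z hz]
    exact ih z hz

lemma pow_mod {c : P7} {s : Finset (Fin 7)} {m : ℕ}
    (hper2 : ∀ y ∈ s, (c ^ m) y = y) (hinv : ∀ x ∈ s, c x ∈ s) :
    ∀ j, ∀ y ∈ s, (c ^ j) y = (c ^ (j % m)) y := by
  intro j y hy
  conv_lhs => rw [← Nat.div_add_mod j m, Nat.add_comm]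
  rw [pow_add, Equiv.Perm.mul_apply, fix_mul hper2 hinv _ y hy]

lemma count_free (c : P7) (m : ℕ) (hm : 0 < m) :
    ∀ n (s : Finset (Fin 7)), s.card = n →
      (∀ x ∈ s, c x ∈ s) →
      (∀ y ∈ s, ∀ j, (c ^ j) y = y → m ∣ j) →
      (∀ y ∈ s, (c ^ m) y = y) → m ∣ s.card := by
  intro n
  induction n using Nat.strong_induction_on with
  | _ n IH =>
    intro s hsn hinv hper hper2
    rcases s.eq_empty_or_nonempty with rfl | ⟨x, hx⟩
    · simp
    have hpm : ∀ j, (c ^ j) x ∈ s := fun j => pow_apply_mem hinv hx j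
    classical
    set T : Finset (Fin 7) := (range m).image (fun j => (c ^ j) x) with hT
    have haux : ∀ i j : ℕ, i ≤ j → j < m → (c ^ i) x = (c ^ j) x → i = j := by
      intro i j hij hjm heq
      have h1 : (c ^ (j - i)) ((c ^ i) x) = (c ^ j) x := by
        rw [← Equiv.Perm.mul_apply, ← pow_add, Nat.sub_add_cancel hij]
      rw [← heq] at h1
      have h2 := hper _ (hpm i) _ h1
      have h3 : j - i < m := by omega
      have h4 := Nat.eq_zero_of_dvd_of_lt h2 h3
      omega
    have hinj : Set.InjOn (fun j => (c ^ j) x) (range m : Finset ℕ) := by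
      intro i hi j hj hij
      simp only [coe_range, Set.mem_Iio] at hi hj
      rcases Nat.le_total i j with h | h
      · exact haux i j h hj hij
      · exact (haux j i h hi hij.symm).symm
    have hTcard : T.card = m := by
      rw [hT, card_image_of_injOn hinj, card_range]
    have hTsub : T ⊆ s := by
      intro t ht
      obtain ⟨j, _, rfl⟩ := mem_image.1 ht
      exact hpm j
    have hxmT : x ∈ T := by
      refine mem_image.2 ⟨0, ?_, by simp⟩
      simpa using hm
    have hcT : ∀ t ∈ T, c t ∈ T := by
      intro t ht
      obtain ⟨j, hj, rfl⟩ := mem_image.1 ht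
      simp only [mem_range] at hj
      have hct : c ((c ^ j) x) = (c ^ (j + 1)) x := by
        rw [pow_succ', Equiv.Perm.mul_apply]
      by_cases hj1 : j + 1 < m
      · rw [hct]; exact mem_image.2 ⟨j + 1, mem_range.2 hj1, rfl⟩
      · have : j + 1 = m := by omega
        rw [hct, this, hper2 x hx]
        exact hxmT
    set s' : Finset (Fin 7) := s \ T with hs'
    have hs'card : s'.card = s.card - m := by
      rw [hs', card_sdiff_of_subset hTsub, hTcard]
    have hmles : m ≤ s.card := hTcard ▸ card_le_card hTsub
    have hinv' : ∀ z ∈ s', c z ∈ s' := by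
      intro z hz
      rw [hs', mem_sdiff] at hz ⊢
      refine ⟨hinv z hz.1, ?_⟩
      intro hcz
      obtain ⟨j, hj, hje⟩ := mem_image.1 hcz
      simp only [mem_range] at hj
      apply hz.2
      by_cases hj0 : j = 0
      · subst hj0
        have h0 : c z = (c ^ m) x := by
          rw [hper2 x hx]; simpa using hje.symm
        have hm1 : (c ^ m) x = c ((c ^ (m - 1)) x) := by
          conv_lhs => rw [show m = (m - 1) + 1 by omega]
          rw [pow_succ', Equiv.Perm.mul_apply]
        have : z = (c ^ (m - 1)) x := c.injective (h0.trans hm1)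
        rw [this]
        exact mem_image.2 ⟨m - 1, mem_range.2 (by omega), rfl⟩
      · have hm1 : (c ^ j) x = c ((c ^ (j - 1)) x) := by
          conv_lhs => rw [show j = (j - 1) + 1 by omega]
          rw [pow_succ', Equiv.Perm.mul_apply]
        have : z = (c ^ (j - 1)) x := c.injective ((hje.symm).trans hm1)
        rw [this]
        exact mem_image.2 ⟨j - 1, mem_range.2 (by omega), rfl⟩
    have hlt : s'.card < n := by
      rw [← hsn]
      have : 0 < s.card := by omega
      omega
    have hdvd' : m ∣ s'.card := by
      refine IH s'.card hlt s' rfl hinv' ?_ ?_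
      · intro y hy j hjy
        exact hper y (mem_sdiff.1 hy).1 j hjy
      · intro y hy
        exact hper2 y (mem_sdiff.1 hy).1
    have : s.card = s'.card + m := by omega
    rw [this]
    exact Nat.dvd_add hdvd' dvd_rfl

lemma trans_of_minper (c : P7) (s : Finset (Fin 7))
    (hinv : ∀ x ∈ s, c x ∈ s)
    (hper : ∀ y ∈ s, ∀ j, (c ^ j) y = y → s.card ∣ j)
    (hper2 : ∀ y ∈ s, (c ^ s.card) y = y)
    {x : Fin 7} (hx : x ∈ s) :
    ∀ y ∈ s, ∃ j, j < s.card ∧ (c ^ j) x = y := by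
  classical
  set m := s.card with hm
  have hm0 : 0 < m := card_pos.2 ⟨x, hx⟩
  set T : Finset (Fin 7) := (range m).image (fun j => (c ^ j) x) with hT
  have hpm : ∀ j, (c ^ j) x ∈ s := fun j => pow_apply_mem hinv hx j
  have haux : ∀ i j : ℕ, i ≤ j → j < m → (c ^ i) x = (c ^ j) x → i = j := by
    intro i j hij hjm heq
    have h1 : (c ^ (j - i)) ((c ^ i) x) = (c ^ j) x := by
      rw [← Equiv.Perm.mul_apply, ← pow_add, Nat.sub_add_cancel hij]
    rw [← heq] at h1
    have h2 := hper _ (hpm i) _ h1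
    have h4 := Nat.eq_zero_of_dvd_of_lt h2 (by omega : j - i < m)
    omega
  have hinj : Set.InjOn (fun j => (c ^ j) x) (range m : Finset ℕ) := by
    intro i hi j hj hij
    simp only [coe_range, Set.mem_Iio] at hi hj
    rcases Nat.le_total i j with h | h
    · exact haux i j h hj hij
    · exact (haux j i h hi hij.symm).symm
  have hTcard : T.card = m := by rw [hT, card_image_of_injOn hinj, card_range]
  have hTsub : T ⊆ s := fun t ht => by
    obtain ⟨j, _, rfl⟩ := mem_image.1 ht
    exact hpm j
  have hTeq : T = s := eq_of_subset_of_card_le hTsub (by omega)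
  intro y hy
  rw [← hTeq] at hy
  obtain ⟨j, hj, hje⟩ := mem_image.1 hy
  exact ⟨j, mem_range.1 hj, hje⟩



lemma agree_pow {c g : P7} {s : Finset (Fin 7)} {a : Fin 7} (ha : a ∈ s)
    (hcomm : ∀ z, c (g z) = g (c z))
    (hginv : ∀ z ∈ s, g z ∈ s)
    (htrans : ∀ y ∈ s, ∃ j, (c ^ j) a = y) :
    ∃ j, ∀ y ∈ s, g y = (c ^ j) y := by
  have hcommp : ∀ t z, (c ^ t) (g z) = g ((c ^ t) z) := by
    intro t
    induction t with
    | zero => intro z; simp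
    | succ n ih =>
      intro z
      rw [pow_succ', Equiv.Perm.mul_apply, ih z, hcomm, Equiv.Perm.mul_apply]
  obtain ⟨j, hj⟩ := htrans (g a) (hginv a ha)
  refine ⟨j, fun y hy => ?_⟩
  obtain ⟨t, ht⟩ := htrans y hy
  subst ht
  calc g ((c ^ t) a) = (c ^ t) (g a) := (hcommp t a).symm
    _ = (c ^ t) ((c ^ j) a) := by rw [hj]
    _ = (c ^ (t + j)) a := by rw [← Equiv.Perm.mul_apply, ← pow_add]
    _ = (c ^ (j + t)) a := by rw [Nat.add_comm]
    _ = (c ^ j) ((c ^ t) a) := by rw [pow_add, Equiv.Perm.mul_apply]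

lemma agree_pow_iter {c g : P7} {s : Finset (Fin 7)} {j : ℕ}
    (hag : ∀ y ∈ s, g y = (c ^ j) y)
    (hginv : ∀ z ∈ s, g z ∈ s) :
    ∀ e, ∀ y ∈ s, (g ^ e) y = (c ^ (j * e)) y := by
  intro e
  induction e with
  | zero => intro y _; simp
  | succ n ih =>
    intro y hy
    have h1 : (g ^ (n + 1)) y = g ((g ^ n) y) := by
      rw [pow_succ', Equiv.Perm.mul_apply]
    have h2 : (g ^ n) y ∈ s := by
      have : ∀ t, (g ^ t) y ∈ s := fun t => pow_apply_mem hginv hy t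
      exact this n
    rw [h1, hag _ h2, ih y hy, ← Equiv.Perm.mul_apply, ← pow_add]
    congr 2
    ring

section WithHmin3

variable (hmin : ∀ k < 7, ∀ φ : G →* Equiv.Perm (Fin k), ¬ Function.Injective φ)

include hmin

lemma cpow_mem_orb {c : P7} (hc : c ∈ Cz G) {x y : Fin 7} (hy : y ∈ orb G x) (n : ℕ) :
    (c ^ n) y ∈ orb G x :=
  pow_apply_mem (fun z hz => cmem_orb hmin hc hz) hy n

lemma minper {c : P7} {x : Fin 7} (hc : c ∈ Cz G) (hmove : c x ≠ x) :
    ∃ m, 1 < m ∧ m ∣ (orb G x).card ∧ (∀ y ∈ orb G x, (c ^ m) y = y) ∧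
      (∀ y ∈ orb G x, ∀ j, (c ^ j) y = y → m ∣ j) := by
  have htriv : ∀ j : ℕ, ∀ y ∈ orb G x, (c ^ j) y = y → ∀ z ∈ orb G x, (c ^ j) z = z := by
    intro j y hy hfix z hz
    have hzy : z ∈ orb G y := (orb_eq_of_mem hy).symm ▸ hz
    exact semireg (Subgroup.pow_mem _ hc j) hzy hfix
  have hP : ∃ j, 0 < j ∧ ∀ y ∈ orb G x, (c ^ j) y = y := by
    refine ⟨orderOf c, orderOf_pos c, fun y _ => ?_⟩
    rw [pow_orderOf_eq_one c]
    rfl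
  classical
  set m := Nat.find hP with hmdef
  obtain ⟨hm0, hmfix⟩ := Nat.find_spec hP
  rw [← hmdef] at hm0 hmfix
  have hmlt : 1 < m := by
    rcases Nat.lt_or_ge 1 m with h | h
    · exact h
    · exfalso
      have hm1 : m = 1 := by omega
      have := hmfix x (self_mem_orb x)
      rw [hm1, pow_one] at this
      exact hmove this
  have hexact : ∀ y ∈ orb G x, ∀ j, (c ^ j) y = y → m ∣ j := by
    intro y hy j hfix
    have hall : ∀ z ∈ orb G x, (c ^ j) z = z := htriv j y hy hfix
    have hr : ∀ z ∈ orb G x, (c ^ (j % m)) z = z := by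
      intro z hz
      rw [← pow_mod hmfix (fun w hw => cmem_orb hmin hc hw) j z hz]
      exact hall z hz
    by_contra hdvd
    have hrm : j % m < m := Nat.mod_lt _ (by omega)
    have hr0 : 0 < j % m := by
      rcases Nat.eq_zero_or_pos (j % m) with h | h
      · exact absurd (Nat.dvd_of_mod_eq_zero h) hdvd
      · exact h
    exact Nat.find_min hP hrm ⟨hr0, hr⟩
  refine ⟨m, hmlt, ?_, hmfix, hexact⟩
  exact count_free c m (by omega) (orb G x).card (orb G x) rfl
    (fun z hz => cmem_orb hmin hc hz) hexact hmfix

lemma kill_prime {c : P7} (hc : c ∈ Cz G) (x : Fin 7)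
    (hp : Nat.Prime ((orb G x).card)) :
    ∃ d, d ∈ G ∧ d ∈ Cz G ∧ Fo d (orb G x) ∧ (∀ y ∈ orb G x, d y = c y) := by
  by_cases htr : ∀ y ∈ orb G x, c y = y
  · exact ⟨1, G.one_mem, Subgroup.one_mem _, fo_one _, fun y hy => by
      rw [htr y hy]; rfl⟩
  push_neg at htr
  obtain ⟨y0, hy0, hy0m⟩ := htr
  have hOy : orb G y0 = orb G x := orb_eq_of_mem hy0
  obtain ⟨m, hm1, hmdvd, hmfix, hmexact⟩ := minper hmin hc hy0m
  rw [hOy] at hmdvd hmfix hmexact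
  have hmp : m = (orb G x).card := by
    rcases hp.eq_one_or_self_of_dvd m hmdvd with h | h
    · omega
    · exact h
  have hcinv : ∀ z ∈ orb G x, c z ∈ orb G x := fun z hz => cmem_orb hmin hc hz
  have htrans : ∀ y ∈ orb G x, ∃ j, (c ^ j) y0 = y := by
    intro y hy
    obtain ⟨j, _, hj⟩ := trans_of_minper c (orb G x) hcinv
      (by rw [← hmp]; exact hmexact) (by rw [← hmp]; exact hmfix) hy0 y hy
    exact ⟨j, hj⟩
  obtain ⟨k, hkG, hk1, hkFo⟩ := exists_small hmin x
  obtain ⟨jk, hjk⟩ := agree_pow hy0 (fun z => comm_apply hc hkG z)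
    (fun z hz => smul_mem_orb hkG hz) htrans
  have hndvd : ¬ m ∣ jk := by
    intro hdvd
    apply hk1
    refine eq_of_fo_ag hkFo (fo_one _) ?_
    intro y hy
    rw [hjk y hy]
    obtain ⟨q, rfl⟩ := hdvd
    show (c ^ (m * q)) y = (1 : P7) y
    rw [fix_mul hmfix hcinv q y hy]
    rfl
  have hcop : Nat.Coprime jk m := by
    rw [hmp] at hndvd ⊢
    exact (Nat.Prime.coprime_iff_not_dvd hp).2 hndvd |>.symm
  obtain ⟨e, -, he⟩ := Nat.exists_mul_mod_eq_one_of_coprime hcop (by omega)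
  refine ⟨k ^ e, Subgroup.pow_mem _ hkG e, ?_, fo_pow hkFo e, ?_⟩
  · -- centralizer membership
    rw [Subgroup.mem_centralizer_iff]
    intro g hg
    obtain ⟨jg, hjg⟩ := agree_pow hy0 (fun z => comm_apply hc hg z)
      (fun z hz => smul_mem_orb hg hz) htrans
    have hke : ∀ y ∈ orb G x, (k ^ e) y = (c ^ (jk * e)) y :=
      agree_pow_iter hjk (fun z hz => smul_mem_orb hkG hz) e
    refine Equiv.ext fun z => ?_
    by_cases hz : z ∈ orb G x
    · rw [Equiv.Perm.mul_apply, Equiv.Perm.mul_apply, hke z hz, hjg z hz]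
      have h1 : (c ^ (jk * e)) z ∈ orb G x := cpow_mem_orb hmin hc hz _
      have h2 : (c ^ jg) z ∈ orb G x := cpow_mem_orb hmin hc hz _
      rw [hjg _ h1, hke _ h2, ← Equiv.Perm.mul_apply, ← Equiv.Perm.mul_apply,
        ← pow_add, ← pow_add, Nat.add_comm]
    · rw [Equiv.Perm.mul_apply, Equiv.Perm.mul_apply, fo_pow hkFo e z hz]
      have : g z ∉ orb G x := not_mem_orb_smul hg hz
      rw [fo_pow hkFo e _ this]
  · intro y hy
    have hke : (k ^ e) y = (c ^ (jk * e)) y :=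
      agree_pow_iter hjk (fun z hz => smul_mem_orb hkG hz) e y hy
    rw [hke, pow_mod hmfix hcinv _ y hy, he, pow_one]

end WithHmin3


section WithHmin4

variable (hmin : ∀ k < 7, ∀ φ : G →* Equiv.Perm (Fin k), ¬ Function.Injective φ)

include hmin

lemma orb_card_prime {x : Fin 7} (h4 : (orb G x).card ≠ 4) :
    Nat.Prime ((orb G x).card) := by
  have h2 := two_le_card_orb hmin x
  have h7 := card_orb_le hmin x
  have h6 := card_orb_ne_six hmin x
  set n := (orb G x).card with hn
  interval_cases n
  · norm_num
  · norm_num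
  · exact absurd rfl h4
  · norm_num
  · exact absurd rfl h6
  · norm_num

lemma reduce {c : P7} (hc : c ∈ Cz G) :
    ∃ u, u ∈ G ∧ u ∈ Cz G ∧ ∀ x, (orb G x).card ≠ 4 → (c * u⁻¹) x = x := by
  suffices h : ∀ t : Finset (Fin 7), ∃ u, u ∈ G ∧ u ∈ Cz G ∧
      ∀ x ∈ t, (orb G x).card ≠ 4 → (c * u⁻¹) x = x by
    obtain ⟨u, h1, h2, h3⟩ := h univ
    exact ⟨u, h1, h2, fun x => h3 x (mem_univ x)⟩
  intro t
  classical
  induction t using Finset.induction_on with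
  | empty => exact ⟨1, G.one_mem, Subgroup.one_mem _, by simp⟩
  | @insert a t hat ih =>
    obtain ⟨u, huG, huC, hu⟩ := ih
    have heC : c * u⁻¹ ∈ Cz G := Subgroup.mul_mem _ hc (Subgroup.inv_mem _ huC)
    by_cases h4 : (orb G a).card = 4
    · refine ⟨u, huG, huC, fun x hx hxc => ?_⟩
      rcases mem_insert.1 hx with rfl | hxt
      · exact absurd h4 hxc
      · exact hu x hxt hxc
    by_cases hea : (c * u⁻¹) a = a
    · refine ⟨u, huG, huC, fun x hx hxc => ?_⟩
      rcases mem_insert.1 hx with rfl | hxt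
      · exact hea
      · exact hu x hxt hxc
    have hp : Nat.Prime ((orb G a).card) := orb_card_prime hmin h4
    obtain ⟨d, hdG, hdC, hdFo, hdAg⟩ := kill_prime hmin heC a hp
    refine ⟨d * u, G.mul_mem hdG huG, Subgroup.mul_mem _ hdC huC, ?_⟩
    intro x hx hxc
    have key : (c * (d * u)⁻¹) x = (c * u⁻¹) (d⁻¹ x) := by
      rw [mul_inv_rev, ← mul_assoc]
      rfl
    by_cases hxO : x ∈ orb G a
    · have hdinv : d⁻¹ x ∈ orb G a := inv_mem_of_fo hdFo hxO
      rw [key, ← hdAg _ hdinv, show d (d⁻¹ x) = x from d.apply_symm_apply x]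
    · rw [key]
      have hdx : d⁻¹ x = x := by
        have := hdFo x hxO
        conv_lhs => rw [← this]
        simp
      rw [hdx]
      rcases mem_insert.1 hx with rfl | hxt
      · exact absurd (self_mem_orb x) hxO
      · exact hu x hxt hxc

end WithHmin4


section WithHmin5

variable (hmin : ∀ k < 7, ∀ φ : G →* Equiv.Perm (Fin k), ¬ Function.Injective φ)

include hmin

lemma four_main {e1 e2 : P7} {a : Fin 7}
    (hcard : (orb G a).card = 4)
    (h1C : e1 ∈ Cz G) (h2C : e2 ∈ Cz G)
    (h1f : Fo e1 (orb G a)) (h2f : Fo e2 (orb G a))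
    (h1n : e1 ∉ G) (h2n : e2 ∉ G) (h2ne : e2 ≠ 1)
    (hm4 : ∀ y ∈ orb G a, (e1 ^ 4) y = y)
    (hexact : ∀ y ∈ orb G a, ∀ j, (e1 ^ j) y = y → 4 ∣ j) :
    e1 * e2⁻¹ ∈ G := by
  have haO : a ∈ orb G a := self_mem_orb a
  have hcinv : ∀ z ∈ orb G a, e1 z ∈ orb G a := fun z hz => cmem_orb hmin h1C hz
  have h2inv : ∀ z ∈ orb G a, e2 z ∈ orb G a := fun z hz => cmem_orb hmin h2C hz
  have htrans : ∀ y ∈ orb G a, ∃ j, (e1 ^ j) a = y := by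
    intro y hy
    obtain ⟨j, _, hj⟩ := trans_of_minper e1 (orb G a) hcinv
      (fun y hy j hj => by rw [hcard]; exact hexact y hy j hj)
      (fun y hy => by rw [hcard]; exact hm4 y hy) haO y hy
    exact ⟨j, hj⟩
  have haux : ∀ i j : ℕ, i ≤ j → j < 4 → (e1 ^ i) a = (e1 ^ j) a → i = j := by
    intro i j hij hj4 heq
    have h1 : (e1 ^ (j - i)) ((e1 ^ i) a) = (e1 ^ j) a := by
      rw [← Equiv.Perm.mul_apply, ← pow_add, Nat.sub_add_cancel hij]
    rw [← heq] at h1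
    have h2 := hexact _ (pow_apply_mem hcinv haO i) _ h1
    have h3 := Nat.eq_zero_of_dvd_of_lt h2 (by omega : j - i < 4)
    omega
  obtain ⟨k, hkG, hk1, hkFo⟩ := exists_small hmin a
  have hkinv : ∀ z ∈ orb G a, k z ∈ orb G a := fun z hz => smul_mem_orb hkG hz
  obtain ⟨jk, hjkA⟩ := agree_pow haO (fun z => comm_apply h1C hkG z) hkinv htrans
  have hjk' : ∀ y ∈ orb G a, k y = (e1 ^ (jk % 4)) y := fun y hy =>
    (hjkA y hy).trans (pow_mod hm4 hcinv jk y hy)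
  have hjklt : jk % 4 < 4 := Nat.mod_lt _ (by norm_num)
  have hjkne : jk % 4 ≠ 0 := by
    intro h0
    apply hk1
    refine eq_of_fo_ag hkFo (fo_one _) ?_
    intro y hy
    rw [hjk' y hy, h0, pow_zero]
  -- element of G acting as e1 on the orbit
  obtain ⟨h, hhG, hha⟩ := mem_orb.1 (hcinv a haO)
  have hhinv : ∀ z ∈ orb G a, h z ∈ orb G a := fun z hz => smul_mem_orb hhG hz
  obtain ⟨jh, hjhA⟩ := agree_pow haO (fun z => comm_apply h1C hhG z) hhinv htrans
  have hjh' : ∀ y ∈ orb G a, h y = (e1 ^ (jh % 4)) y := fun y hy =>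
    (hjhA y hy).trans (pow_mod hm4 hcinv jh y hy)
  have hjhlt : jh % 4 < 4 := Nat.mod_lt _ (by norm_num)
  have hjh1 : ∀ y ∈ orb G a, h y = e1 y := by
    have heq : (e1 ^ (jh % 4)) a = (e1 ^ 1) a := by
      rw [← hjh' a haO, pow_one, hha]
    have h14 : (1 : ℕ) < 4 := by norm_num
    have : jh % 4 = 1 := by
      rcases Nat.le_total (jh % 4) 1 with hle | hle
      · exact haux _ _ hle h14 heq
      · exact (haux _ _ hle hjhlt heq.symm).symm
    intro y hy
    rw [hjh' y hy, this, pow_one]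
  have hpowh : ∀ j : ℕ, ∀ y ∈ orb G a, (h ^ j) y = (e1 ^ j) y := by
    intro j
    induction j with
    | zero => intro y _; simp
    | succ n ih =>
      intro y hy
      have hmem : (h ^ n) y ∈ orb G a := pow_apply_mem hhinv hy n
      rw [pow_succ', Equiv.Perm.mul_apply, ih y hy]
      rw [← ih y hy, hjh1 _ hmem, ih y hy, pow_succ', Equiv.Perm.mul_apply]
  have htransh : ∀ y ∈ orb G a, ∃ j, (h ^ j) a = y := by
    intro y hy
    obtain ⟨j, hj⟩ := htrans y hy
    exact ⟨j, by rw [hpowh j a haO]; exact hj⟩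
  obtain ⟨je, hjeA⟩ := agree_pow haO (fun z => (comm_apply h2C hhG z).symm) h2inv htransh
  have hje' : ∀ y ∈ orb G a, e2 y = (e1 ^ (je % 4)) y := by
    intro y hy
    rw [hjeA y hy, hpowh je y hy]
    exact pow_mod hm4 hcinv je y hy
  have hjelt : je % 4 < 4 := Nat.mod_lt _ (by norm_num)
  have hjene : je % 4 ≠ 0 := by
    intro h0
    apply h2ne
    refine eq_of_fo_ag h2f (fo_one _) ?_
    intro y hy
    rw [hje' y hy, h0, pow_zero]
  have hjkcase : jk % 4 = 1 ∨ jk % 4 = 2 ∨ jk % 4 = 3 := by omega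
  rcases hjkcase with h1 | h2 | h3
  · -- k = e1, contradiction
    exfalso
    apply h1n
    have : k = e1 := by
      refine eq_of_fo_ag hkFo h1f ?_
      intro y hy
      rw [hjk' y hy, h1, pow_one]
    exact this ▸ hkG
  swap
  · -- jk % 4 = 3 : k^3 = e1, contradiction
    exfalso
    apply h1n
    have hk3 : k ^ 3 = e1 := by
      refine eq_of_fo_ag (fo_pow hkFo 3) h1f ?_
      intro y hy
      have h9 : (k ^ 3) y = (e1 ^ (jk % 4 * 3)) y :=
        agree_pow_iter hjk' hkinv 3 y hy
      rw [h9, h3, pow_mod hm4 hcinv 9 y hy]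
      norm_num
    exact hk3 ▸ Subgroup.pow_mem _ hkG 3
  · -- jk % 4 = 2 : k acts as e1^2
    have khalf : ∀ y ∈ orb G a, k y = (e1 ^ 2) y := by
      intro y hy
      rw [hjk' y hy, h2]
    have hjecase : je % 4 = 1 ∨ je % 4 = 2 ∨ je % 4 = 3 := by omega
    rcases hjecase with j1 | j2 | j3
    · -- e2 acts as e1 : e1 * e2⁻¹ = 1
      have : e1 * e2⁻¹ = 1 := by
        refine Equiv.ext fun z => ?_
        by_cases hz : z ∈ orb G a
        · have hw : e2⁻¹ z ∈ orb G a := inv_mem_of_fo h2f hz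
          have hz2 : e2 (e2⁻¹ z) = z := Equiv.apply_symm_apply e2 z
          have : e1 (e2⁻¹ z) = z := by
            conv_rhs => rw [← hz2]
            rw [hje' _ hw, j1, pow_one]
          simpa [Equiv.Perm.mul_apply] using this
        · have hz2 : e2⁻¹ z = z := by
            have := h2f z hz
            conv_lhs => rw [← this]
            simp
          simp only [Equiv.Perm.mul_apply, hz2, Equiv.Perm.one_apply]
          exact h1f z hz
      rw [this]
      exact G.one_mem
    · -- e2 = k, contradiction
      exfalso
      apply h2n
      have : e2 = k := by
        refine eq_of_fo_ag h2f hkFo ?_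
        intro y hy
        rw [hje' y hy, j2, khalf y hy]
      exact this ▸ hkG
    · -- e2 acts as e1^3 : e1 * e2⁻¹ = k
      have : e1 * e2⁻¹ = k := by
        refine eq_of_fo_ag (fo_mul h1f (fo_inv h2f)) hkFo ?_
        intro z hz
        have hw : e2⁻¹ z ∈ orb G a := inv_mem_of_fo h2f hz
        have hz2 : e2 (e2⁻¹ z) = z := Equiv.apply_symm_apply e2 z
        have hz3 : (e1 ^ 3) (e2⁻¹ z) = z := by
          conv_rhs => rw [← hz2]
          rw [hje' _ hw, j3]
        have h5 : k z = (e1 ^ 5) (e2⁻¹ z) := by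
          rw [khalf z hz]
          conv_lhs => rw [← hz3]
          rw [← Equiv.Perm.mul_apply, ← pow_add]
        rw [Equiv.Perm.mul_apply, h5, pow_mod hm4 (fun z hz => cmem_orb hmin h1C hz) 5 _ hw]
        norm_num
      rw [this]
      exact hkG


lemma invol_case {e1 e2 : P7} {a : Fin 7}
    (hcard : (orb G a).card = 4)
    (h1C : e1 ∈ Cz G) (h2C : e2 ∈ Cz G)
    (h1f : Fo e1 (orb G a)) (h2f : Fo e2 (orb G a))
    (h1n : e1 ∉ G) (h2n : e2 ∉ G) (h1ne : e1 ≠ 1) (h2ne : e2 ≠ 1)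
    (h1sq : ∀ y ∈ orb G a, (e1 ^ 2) y = y)
    (h2sq : ∀ y ∈ orb G a, (e2 ^ 2) y = y) :
    e1 * e2⁻¹ ∈ G := by
  classical
  have haO : a ∈ orb G a := self_mem_orb a
  have h1inv : ∀ z ∈ orb G a, e1 z ∈ orb G a := fun z hz => cmem_orb hmin h1C hz
  have h2inv : ∀ z ∈ orb G a, e2 z ∈ orb G a := fun z hz => cmem_orb hmin h2C hz
  -- global involutions
  have h1g : ∀ z, e1 (e1 z) = z := by
    intro z
    by_cases hz : z ∈ orb G a
    · have := h1sq z hz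
      rwa [sq, Equiv.Perm.mul_apply] at this
    · rw [h1f z hz, h1f z hz]
  have h2g : ∀ z, e2 (e2 z) = z := by
    intro z
    by_cases hz : z ∈ orb G a
    · have := h2sq z hz
      rwa [sq, Equiv.Perm.mul_apply] at this
    · rw [h2f z hz, h2f z hz]
  have h2inveq : e2⁻¹ = e2 := by
    have h : e2 * e2 = 1 := Equiv.ext fun z => h2g z
    rw [inv_eq_of_mul_eq_one_right h]
  rw [h2inveq]
  -- fixed-point-freeness on the orbit
  have hfpf : ∀ (e : P7), e ∈ Cz G → Fo e (orb G a) → e ≠ 1 → ∀ y ∈ orb G a, e y ≠ y := by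
    intro e heC heF heN y hy hfix
    apply heN
    refine eq_of_fo_ag heF (fo_one _) ?_
    intro u hu
    have huy : u ∈ orb G y := (orb_eq_of_mem hy).symm ▸ hu
    show e u = u
    exact semireg heC huy hfix
  have hfpf1 : ∀ y ∈ orb G a, e1 y ≠ y := hfpf e1 h1C h1f h1ne
  have hfpf2 : ∀ y ∈ orb G a, e2 y ≠ y := hfpf e2 h2C h2f h2ne
  -- agreement at one point propagates everywhere on the orbit
  have hagr : ∀ y ∈ orb G a, e1 y = e2 y → ∀ u ∈ orb G a, e1 u = e2 u := by
    intro y hy heq u hu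
    by_cases huy : u = y
    · rw [huy]; exact heq
    by_cases huy' : u = e1 y
    · rw [huy', h1g y, heq, h2g y]
    have hy'O : e1 y ∈ orb G a := h1inv y hy
    have hyy' : e1 y ≠ y := hfpf1 y hy
    have hsub : ({u, y, e1 y} : Finset (Fin 7)) ⊆ orb G a := by
      intro v hv
      simp only [mem_insert, mem_singleton] at hv
      rcases hv with rfl | rfl | rfl
      · exact hu
      · exact hy
      · exact hy'O
    have hc3 : ({u, y, e1 y} : Finset (Fin 7)).card = 3 := by
      rw [card_insert_of_notMem (by simp [huy, huy']),
        card_insert_of_notMem (by simp [hyy'.symm]), card_singleton]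
    have hc1 : (orb G a \ {u, y, e1 y}).card = 1 := by
      rw [card_sdiff_of_subset hsub, hcard, hc3]
    obtain ⟨w, hw⟩ := card_eq_one.1 hc1
    have hmemw : ∀ v, v ∈ orb G a → v ≠ u → v ≠ y → v ≠ e1 y → v = w := by
      intro v hv hv1 hv2 hv3
      have : v ∈ orb G a \ {u, y, e1 y} := by
        simp only [mem_sdiff, mem_insert, mem_singleton]
        exact ⟨hv, by tauto⟩
      rw [hw] at this
      simpa using this
    have he1u : e1 u = w := by
      refine hmemw _ (h1inv u hu) (hfpf1 u hu) ?_ ?_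
      · intro h
        apply huy'
        conv_lhs => rw [← h1g u]
        rw [h]
      · intro h
        exact huy (e1.injective h)
    have he2u : e2 u = w := by
      refine hmemw _ (h2inv u hu) (hfpf2 u hu) ?_ ?_
      · intro h
        apply huy'
        conv_lhs => rw [← h2g u]
        rw [h, ← heq]
      · intro h
        exact huy (e2.injective (h.trans heq))
    rw [he1u, he2u]
  by_cases hall : ∀ u ∈ orb G a, e1 u = e2 u
  · have heq : e1 = e2 := eq_of_fo_ag h1f h2f hall
    have : e1 * e2 = 1 := by
      rw [heq]
      exact Equiv.ext fun z => h2g z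
    rw [this]
    exact G.one_mem
  have hne : ∀ y ∈ orb G a, e1 y ≠ e2 y := by
    intro y hy h
    exact hall (hagr y hy h)
  -- the four points
  set b := e1 a with hb
  set c := e2 a with hc
  set d := e1 c with hd
  have hbO : b ∈ orb G a := h1inv a haO
  have hcO : c ∈ orb G a := h2inv a haO
  have hdO : d ∈ orb G a := h1inv c hcO
  have hba : b ≠ a := hfpf1 a haO
  have hca : c ≠ a := hfpf2 a haO
  have hbc : b ≠ c := hne a haO
  have hdc : d ≠ c := hfpf1 c hcO
  have hda : d ≠ a := by
    intro h
    have h2 : e1 c = e1 b := by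
      rw [hd] at h
      rw [h, ← h1g a]
    exact hbc (e1.injective h2).symm
  have hdb : d ≠ b := by
    intro h
    have h2 : e1 c = e1 a := by rw [← hd, h, hb]
    exact hca (e1.injective h2)
  have he1b : e1 b = a := h1g a
  have he1d : e1 d = c := h1g c
  have he2c : e2 c = a := h2g a
  have hsub4 : ({a, b, c, d} : Finset (Fin 7)) ⊆ orb G a := by
    intro v hv
    simp only [mem_insert, mem_singleton] at hv
    rcases hv with rfl | rfl | rfl | rfl
    · exact haO
    · exact hbO
    · exact hcO
    · exact hdO
  have hc4 : ({a, b, c, d} : Finset (Fin 7)).card = 4 := by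
    rw [card_insert_of_notMem (by simp [hba.symm, hca.symm, hda.symm]),
      card_insert_of_notMem (by simp [hbc, hdb.symm]),
      card_insert_of_notMem (by simp [hdc.symm]), card_singleton]
  have hOeq : ({a, b, c, d} : Finset (Fin 7)) = orb G a :=
    eq_of_subset_of_card_le hsub4 (by rw [hcard, hc4])
  have hmem4 : ∀ u, u ∈ orb G a → u = a ∨ u = b ∨ u = c ∨ u = d := by
    intro u hu
    rw [← hOeq] at hu
    simpa using hu
  have T1a : e1 a = b := hb.symm
  have T1b : e1 b = a := by rw [hb, h1g]
  have T1c : e1 c = d := hd.symm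
  have T1d : e1 d = c := by rw [hd, h1g]
  have T2a : e2 a = c := hc.symm
  have T2b : e2 b = d := by
    have hm := hmem4 (e2 b) (h2inv b hbO)
    have k1 : e2 b ≠ b := hfpf2 b hbO
    have k2 : e2 b ≠ a := by
      intro h
      have h2 := congrArg e2 h
      rw [h2g] at h2
      exact hbc (h2.trans hc.symm)
    have k3 : e2 b ≠ c := by
      intro h
      rw [hc] at h
      exact hba (e2.injective h)
    tauto
  have T2c : e2 c = a := by rw [hc, h2g]
  have T2d : e2 d = b := by rw [← T2b, h2g]
  -- the minimality witness
  obtain ⟨k, hkG, hk1, hkFo⟩ := exists_small hmin a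
  have hkinv : ∀ z ∈ orb G a, k z ∈ orb G a := fun z hz => smul_mem_orb hkG hz
  have hcomm1 : ∀ z, k (e1 z) = e1 (k z) := fun z => (comm_apply h1C hkG z).symm
  have hcomm2 : ∀ z, k (e2 z) = e2 (k z) := fun z => (comm_apply h2C hkG z).symm
  have hka := hmem4 (k a) (hkinv a haO)
  rcases hka with hka | hka | hka | hka
  · -- k = 1, contradiction
    exfalso
    apply hk1
    refine eq_of_fo_ag hkFo (fo_one _) ?_
    intro u hu
    have vb : k b = b := by
      calc k b = k (e1 a) := by rw [hb]
        _ = e1 (k a) := hcomm1 a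
        _ = e1 a := by rw [hka]
        _ = b := T1a
    have vc : k c = c := by
      calc k c = k (e2 a) := by rw [hc]
        _ = e2 (k a) := hcomm2 a
        _ = e2 a := by rw [hka]
        _ = c := T2a
    have vd : k d = d := by
      calc k d = k (e1 c) := by rw [hd]
        _ = e1 (k c) := hcomm1 c
        _ = e1 c := by rw [vc]
        _ = d := T1c
    show k u = u
    rcases hmem4 u hu with rfl | rfl | rfl | rfl
    · exact hka
    · exact vb
    · exact vc
    · exact vd
  · -- k = e1, contradiction
    exfalso
    apply h1n
    have hke : k = e1 := by
      refine eq_of_fo_ag hkFo h1f ?_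
      intro u hu
      have va : k a = e1 a := by rw [hka, T1a]
      have vb : k b = e1 b := by
        calc k b = k (e1 a) := by rw [hb]
          _ = e1 (k a) := hcomm1 a
          _ = e1 b := by rw [hka]
      have vc : k c = e1 c := by
        calc k c = k (e2 a) := by rw [hc]
          _ = e2 (k a) := hcomm2 a
          _ = e2 b := by rw [hka]
          _ = d := T2b
          _ = e1 c := T1c.symm
      have vd : k d = e1 d := by
        calc k d = k (e1 c) := by rw [hd]
          _ = e1 (k c) := hcomm1 c
          _ = e1 (e1 c) := by rw [vc]
          _ = c := h1g c
          _ = e1 d := T1d.symm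
      rcases hmem4 u hu with rfl | rfl | rfl | rfl
      · exact va
      · exact vb
      · exact vc
      · exact vd
    exact hke ▸ hkG
  · -- k = e2, contradiction
    exfalso
    apply h2n
    have hke : k = e2 := by
      refine eq_of_fo_ag hkFo h2f ?_
      intro u hu
      have va : k a = e2 a := by rw [hka, T2a]
      have vb : k b = e2 b := by
        calc k b = k (e1 a) := by rw [hb]
          _ = e1 (k a) := hcomm1 a
          _ = e1 c := by rw [hka]
          _ = d := T1c
          _ = e2 b := T2b.symm
      have vc : k c = e2 c := by
        calc k c = k (e2 a) := by rw [hc]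
          _ = e2 (k a) := hcomm2 a
          _ = e2 c := by rw [hka]
      have vd : k d = e2 d := by
        calc k d = k (e1 c) := by rw [hd]
          _ = e1 (k c) := hcomm1 c
          _ = e1 (e2 c) := by rw [vc]
          _ = e1 a := by rw [T2c]
          _ = b := T1a
          _ = e2 d := T2d.symm
      rcases hmem4 u hu with rfl | rfl | rfl | rfl
      · exact va
      · exact vb
      · exact vc
      · exact vd
    exact hke ▸ hkG
  · -- k = e1 * e2
    have vc : k c = b := by
      calc k c = k (e2 a) := by rw [hc]
        _ = e2 (k a) := hcomm2 a
        _ = e2 d := by rw [hka]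
        _ = b := T2d
    have hke : e1 * e2 = k := by
      refine eq_of_fo_ag (fo_mul h1f h2f) hkFo ?_
      intro u hu
      show (e1 * e2) u = k u
      rw [Equiv.Perm.mul_apply]
      rcases hmem4 u hu with h | h | h | h <;> rw [h]
      · calc e1 (e2 a) = e1 c := by rw [T2a]
          _ = d := T1c
          _ = k a := hka.symm
      · have hkb : k b = c := by
          calc k b = k (e1 a) := by rw [hb]
            _ = e1 (k a) := hcomm1 a
            _ = e1 d := by rw [hka]
            _ = c := T1d
        calc e1 (e2 b) = e1 d := by rw [T2b]
          _ = c := T1d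
          _ = k b := hkb.symm
      · calc e1 (e2 c) = e1 a := by rw [T2c]
          _ = b := T1a
          _ = k c := vc.symm
      · have hkd : k d = a := by
          calc k d = k (e1 c) := by rw [hd]
            _ = e1 (k c) := hcomm1 c
            _ = e1 b := by rw [vc]
            _ = a := T1b
        calc e1 (e2 d) = e1 b := by rw [T2d]
          _ = a := T1b
          _ = k d := hkd.symm
    rw [hke]
    exact hkG


lemma four_case {e1 e2 : P7} {a : Fin 7}
    (hcard : (orb G a).card = 4)
    (h1C : e1 ∈ Cz G) (h2C : e2 ∈ Cz G)
    (h1f : Fo e1 (orb G a)) (h2f : Fo e2 (orb G a))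
    (h1n : e1 ∉ G) (h2n : e2 ∉ G) (h1ne : e1 ≠ 1) (h2ne : e2 ≠ 1) :
    e1 * e2⁻¹ ∈ G := by
  have hmove : ∀ (e : P7), Fo e (orb G a) → e ≠ 1 → ∃ y, y ∈ orb G a ∧ e y ≠ y := by
    intro e heF heN
    by_contra h
    push_neg at h
    apply heN
    exact eq_of_fo_ag heF (fo_one _) fun u hu => h u hu
  obtain ⟨y1, hy1O, hy1⟩ := hmove e1 h1f h1ne
  obtain ⟨y2, hy2O, hy2⟩ := hmove e2 h2f h2ne
  obtain ⟨m1, hm1lt, hm1dvd, hm1fix, hm1ex⟩ := minper hmin h1C hy1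
  obtain ⟨m2, hm2lt, hm2dvd, hm2fix, hm2ex⟩ := minper hmin h2C hy2
  have hOy1 : orb G y1 = orb G a := orb_eq_of_mem hy1O
  have hOy2 : orb G y2 = orb G a := orb_eq_of_mem hy2O
  rw [hOy1] at hm1dvd hm1fix hm1ex
  rw [hOy2] at hm2dvd hm2fix hm2ex
  rw [hcard] at hm1dvd hm2dvd
  have hm1c : m1 = 2 ∨ m1 = 4 := by
    have h4 : m1 ≤ 4 := Nat.le_of_dvd (by norm_num) hm1dvd
    interval_cases m1 <;> first | (left; rfl) | (right; rfl) | (exfalso; omega)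
  have hm2c : m2 = 2 ∨ m2 = 4 := by
    have h4 : m2 ≤ 4 := Nat.le_of_dvd (by norm_num) hm2dvd
    interval_cases m2 <;> first | (left; rfl) | (right; rfl) | (exfalso; omega)
  rcases hm1c with h | h
  · rcases hm2c with h' | h'
    · exact invol_case hmin hcard h1C h2C h1f h2f h1n h2n h1ne h2ne
        (h ▸ hm1fix) (h' ▸ hm2fix)
    · have hG : e2 * e1⁻¹ ∈ G :=
        four_main hmin hcard h2C h1C h2f h1f h2n h1n h1ne (h' ▸ hm2fix) (h' ▸ hm2ex)
      have heq : e1 * e2⁻¹ = (e2 * e1⁻¹)⁻¹ := by group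
      rw [heq]
      exact G.inv_mem hG
  · exact four_main hmin hcard h1C h2C h1f h2f h1n h2n h2ne (h ▸ hm1fix) (h ▸ hm1ex)

lemma key {c1 c2 : P7} (h1 : c1 ∈ Cz G) (h2 : c2 ∈ Cz G)
    (hn1 : c1 ∉ G) (hn2 : c2 ∉ G) : c1 * c2⁻¹ ∈ G := by
  obtain ⟨u1, hu1G, hu1C, hu1⟩ := reduce hmin h1
  obtain ⟨u2, hu2G, hu2C, hu2⟩ := reduce hmin h2
  have h1C : c1 * u1⁻¹ ∈ Cz G := Subgroup.mul_mem _ h1 (Subgroup.inv_mem _ hu1C)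
  have h2C : c2 * u2⁻¹ ∈ Cz G := Subgroup.mul_mem _ h2 (Subgroup.inv_mem _ hu2C)
  have h1nG : c1 * u1⁻¹ ∉ G := by
    intro h
    apply hn1
    have := G.mul_mem h hu1G
    simpa using this
  have h2nG : c2 * u2⁻¹ ∉ G := by
    intro h
    apply hn2
    have := G.mul_mem h hu2G
    simpa using this
  have h1ne : c1 * u1⁻¹ ≠ 1 := fun h => h1nG (h ▸ G.one_mem)
  have h2ne : c2 * u2⁻¹ ≠ 1 := fun h => h2nG (h ▸ G.one_mem)
  obtain ⟨a1, ha1⟩ : ∃ a, (c1 * u1⁻¹) a ≠ a := by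
    by_contra h
    push_neg at h
    exact h1ne (Equiv.ext h)
  obtain ⟨a2, ha2⟩ : ∃ a, (c2 * u2⁻¹) a ≠ a := by
    by_contra h
    push_neg at h
    exact h2ne (Equiv.ext h)
  have hc1 : (orb G a1).card = 4 := by
    by_contra h
    exact ha1 (hu1 a1 h)
  have hc2 : (orb G a2).card = 4 := by
    by_contra h
    exact ha2 (hu2 a2 h)
  have horb : orb G a2 = orb G a1 := orb_four_eq hmin hc2 hc1
  have hfo : ∀ (e : P7), (∀ x, (orb G x).card ≠ 4 → e x = x) → Fo e (orb G a1) := by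
    intro e he z hz
    apply he
    intro h4
    apply hz
    have : orb G z = orb G a1 := orb_four_eq hmin h4 hc1
    exact this ▸ self_mem_orb z
  have h1f : Fo (c1 * u1⁻¹) (orb G a1) := hfo _ hu1
  have h2f : Fo (c2 * u2⁻¹) (orb G a1) := hfo _ hu2
  have hkey : (c1 * u1⁻¹) * (c2 * u2⁻¹)⁻¹ ∈ G :=
    four_case hmin hc1 h1C h2C h1f h2f h1nG h2nG h1ne h2ne
  -- now recombine
  have hcomm : (u1 * u2⁻¹) * (c2 * u2⁻¹)⁻¹ = (c2 * u2⁻¹)⁻¹ * (u1 * u2⁻¹) := by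
    have hmem : u1 * u2⁻¹ ∈ G := G.mul_mem hu1G (G.inv_mem hu2G)
    have := Subgroup.mem_centralizer_iff.1 (Subgroup.inv_mem _ h2C) _ hmem
    exact this
  have hfinal : c1 * c2⁻¹ = ((c1 * u1⁻¹) * (c2 * u2⁻¹)⁻¹) * (u1 * u2⁻¹) := by
    rw [mul_assoc (c1 * u1⁻¹), ← hcomm]
    group
  rw [hfinal]
  exact G.mul_mem hkey (G.mul_mem hu1G (G.inv_mem hu2G))

end WithHmin5

end R7

theorem relindex_dvd_two_of_deg_seven
    (G : Subgroup (Equiv.Perm (Fin 7)))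
    (hmin : ∀ k < 7, ∀ φ : G →* Equiv.Perm (Fin k), ¬ Function.Injective φ) :
    Subgroup.relIndex G (G ⊔ Subgroup.centralizer (G : Set (Equiv.Perm (Fin 7)))) ∣ 2 := by
  classical
  set C := Subgroup.centralizer (G : Set (Equiv.Perm (Fin 7))) with hC
  set H := G ⊔ C with hH
  have hprod : ∀ x ∈ H, ∃ g ∈ G, ∃ c ∈ C, x = g * c := by
    let K : Subgroup (Equiv.Perm (Fin 7)) :=
      { carrier := {x | ∃ g ∈ G, ∃ c ∈ C, x = g * c}
        one_mem' := ⟨1, G.one_mem, 1, C.one_mem, by simp⟩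
        mul_mem' := by
          rintro x y ⟨g1, hg1, c1, hc1, rfl⟩ ⟨g2, hg2, c2, hc2, rfl⟩
          refine ⟨g1 * g2, G.mul_mem hg1 hg2, c1 * c2, C.mul_mem hc1 hc2, ?_⟩
          have h : g2 * c1 = c1 * g2 := Subgroup.mem_centralizer_iff.1 hc1 g2 hg2
          rw [mul_assoc g1, ← mul_assoc c1, ← h, mul_assoc g2, ← mul_assoc g1]
        inv_mem' := by
          rintro x ⟨g, hg, c, hc, rfl⟩
          refine ⟨g⁻¹, G.inv_mem hg, c⁻¹, C.inv_mem hc, ?_⟩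
          rw [mul_inv_rev]
          exact (Subgroup.mem_centralizer_iff.1 (C.inv_mem hc) g⁻¹ (G.inv_mem hg)).symm }
    have hle : H ≤ K := by
      rw [hH]
      refine sup_le ?_ ?_
      · intro g hg
        exact ⟨g, hg, 1, C.one_mem, by simp⟩
      · intro c hc
        exact ⟨1, G.one_mem, c, hc, by simp⟩
    exact fun x hx => hle hx
  have hco : ∀ x y : Equiv.Perm (Fin 7), x ∈ H → y ∈ H → x ∉ G → y ∉ G →
      x⁻¹ * y ∈ G := by
    intro x y hx hy hnx hny
    obtain ⟨g1, hg1, c1, hc1, rfl⟩ := hprod x hx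
    obtain ⟨g2, hg2, c2, hc2, rfl⟩ := hprod y hy
    have hnc1 : c1 ∉ G := fun h => hnx (G.mul_mem hg1 h)
    have hnc2 : c2 ∉ G := fun h => hny (G.mul_mem hg2 h)
    have hnc1' : c1⁻¹ ∉ G := fun h => hnc1 (by simpa using G.inv_mem h)
    have hnc2' : c2⁻¹ ∉ G := fun h => hnc2 (by simpa using G.inv_mem h)
    have hkey : c1⁻¹ * c2 ∈ G := by
      have h := R7.key hmin (C.inv_mem hc2) (C.inv_mem hc1) hnc2' hnc1'
      have h2 : (c2⁻¹ * c1⁻¹⁻¹)⁻¹ = c1⁻¹ * c2 := by group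
      exact h2 ▸ G.inv_mem h
    have hcommEq : c1⁻¹ * (g1⁻¹ * g2) = (g1⁻¹ * g2) * c1⁻¹ :=
      (Subgroup.mem_centralizer_iff.1 (C.inv_mem hc1) _
        (G.mul_mem (G.inv_mem hg1) hg2)).symm
    have halg : (g1 * c1)⁻¹ * (g2 * c2) = (c1⁻¹ * (g1⁻¹ * g2)) * c2 := by group
    rw [halg, hcommEq, mul_assoc]
    exact G.mul_mem (G.mul_mem (G.inv_mem hg1) hg2) hkey
  -- index computation
  show (G.subgroupOf H).index ∣ 2
  by_cases hNall : ∀ h : H, h ∈ G.subgroupOf H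
  · have htop : G.subgroupOf H = ⊤ := by
      ext h
      simp [hNall h]
    rw [htop, Subgroup.index_top]
    norm_num
  · push_neg at hNall
    obtain ⟨h0, hh0⟩ := hNall
    have hsurj : Function.Surjective
        (fun i : Fin 2 => if i = 0 then ((1 : H) : H ⧸ G.subgroupOf H)
          else ((h0 : H) : H ⧸ G.subgroupOf H)) := by
      intro q
      induction q using QuotientGroup.induction_on with
      | _ h =>
        by_cases hh : h ∈ G.subgroupOf H
        · refine ⟨0, ?_⟩
          simp only [if_pos rfl]
          refine (QuotientGroup.eq.2 ?_)
          simpa using hh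
        · refine ⟨1, ?_⟩
          simp only [Fin.one_eq_zero_iff, if_neg (by norm_num : (1 : Fin 2) ≠ 0)]
          refine (QuotientGroup.eq.2 ?_)
          rw [Subgroup.mem_subgroupOf]
          push_cast
          refine hco _ _ h0.2 h.2 ?_ ?_
          · intro hmem
            exact hh0 (Subgroup.mem_subgroupOf.2 hmem)
          · intro hmem
            exact hh (Subgroup.mem_subgroupOf.2 hmem)
    have hle : Nat.card (H ⧸ G.subgroupOf H) ≤ 2 := by
      have h := Nat.card_le_card_of_surjective _ hsurj
      simpa using h
    have hpos : 0 < Nat.card (H ⧸ G.subgroupOf H) := Nat.card_pos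
    have hidx : (G.subgroupOf H).index = Nat.card (H ⧸ G.subgroupOf H) := rfl
    rw [hidx]
    have h12 : Nat.card (H ⧸ G.subgroupOf H) = 1 ∨
        Nat.card (H ⧸ G.subgroupOf H) = 2 := by omega
    rcases h12 with h | h <;> rw [h] <;> norm_num
end
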